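/- arXiv:1301.0810 — 3 statements merged into one kernel-verified Lean document; each statement's English description precedes it below -/
import Mathlib

section
/- Let X be a finite-dimensional real normed space and let A ⊂ X be a nonempty closed set. If the recession cone A_∞ is a pointed convex cone and A = A + A_∞, then the convex hull conv A is closed. -/
open Set Filter Topology Pointwise

/-- The recession cone `S_∞` of a set `S`. -/
def recessionCone {X : Type*} [NormedAddCommGroup X] [NormedSpace ℝ X] (S : Set X) : Set X :=
  {u | ∃ t : ℕ → ℝ, (∀ n, 0 < t n) ∧ Filter.Tendsto t Filter.atTop (𝓝 0) ∧
       ∃ a : ℕ → X, (∀ n, a n ∈ S) ∧ Filter.Tendsto (fun n => t n • a n) Filter.atTop (𝓝 u)}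

section Aux
variable {X : Type*} [NormedAddCommGroup X] [NormedSpace ℝ X]


lemma zero_mem_rc {A : Set X} (hA : A.Nonempty) : (0:X) ∈ recessionCone A := by
  obtain ⟨a, ha⟩ := hA
  refine ⟨fun n => 1/(n+1), fun n => by positivity, tendsto_one_div_add_atTop_nhds_zero_nat,
    fun _ => a, fun _ => ha, ?_⟩
  simpa using (tendsto_one_div_add_atTop_nhds_zero_nat (𝕜 := ℝ)).smul_const a

lemma mem_rc_of_eventually {A : Set X} {t : ℕ → ℝ} {a : ℕ → X} {u : X}
    (ht : ∀ᶠ n in atTop, 0 < t n) (ht0 : Tendsto t atTop (𝓝 0))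
    (ha : ∀ n, a n ∈ A) (hu : Tendsto (fun n => t n • a n) atTop (𝓝 u)) :
    u ∈ recessionCone A := by
  obtain ⟨n₀, hn₀⟩ := eventually_atTop.mp ht
  have hshift : Tendsto (fun n : ℕ => n + n₀) atTop atTop := tendsto_add_atTop_nat n₀
  exact ⟨fun n => t (n + n₀), fun n => hn₀ _ (Nat.le_add_left _ _), ht0.comp hshift,
    fun n => a (n + n₀), fun n => ha _, hu.comp hshift⟩

lemma add_mem_rc {A : Set X} (hconv : Convex ℝ (recessionCone A))
    (hcone : ∀ t : ℝ, 0 < t → ∀ u ∈ recessionCone A, t • u ∈ recessionCone A)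
    {u v : X} (hu : u ∈ recessionCone A) (hv : v ∈ recessionCone A) :
    u + v ∈ recessionCone A := by
  have h := hconv hu hv (by norm_num : (0:ℝ) ≤ 1/2) (by norm_num : (0:ℝ) ≤ 1/2) (by norm_num)
  have h2 := hcone 2 (by norm_num) _ h
  have : (2:ℝ) • ((1/2 : ℝ) • u + (1/2 : ℝ) • v) = u + v := by
    rw [smul_add, smul_smul, smul_smul]; norm_num
  rwa [this] at h2

lemma sum_mem_rc {A : Set X} (hA : A.Nonempty) (hconv : Convex ℝ (recessionCone A))
    (hcone : ∀ t : ℝ, 0 < t → ∀ u ∈ recessionCone A, t • u ∈ recessionCone A)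
    {ι : Type*} (s : Finset ι) (f : ι → X) (hf : ∀ i ∈ s, f i ∈ recessionCone A) :
    ∑ i ∈ s, f i ∈ recessionCone A := by
  classical
  induction s using Finset.induction_on with
  | empty => simpa using zero_mem_rc hA
  | insert _ _ hnot ih =>
    rw [Finset.sum_insert hnot]
    exact add_mem_rc hconv hcone (hf _ (Finset.mem_insert_self _ _))
      (ih fun i hi => hf i (Finset.mem_insert_of_mem hi))

end Aux


lemma caratheodory_fin {X : Type*} [NormedAddCommGroup X] [NormedSpace ℝ X]
    [FiniteDimensional ℝ X] {A : Set X} (hA : A.Nonempty) {y : X}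
    (hy : y ∈ convexHull ℝ A) :
    ∃ (w : Fin (Module.finrank ℝ X + 1) → ℝ) (z : Fin (Module.finrank ℝ X + 1) → X),
      (∀ i, 0 ≤ w i) ∧ (∑ i, w i = 1) ∧ (∀ i, z i ∈ A) ∧ (∑ i, w i • z i = y) := by
  classical
  obtain ⟨ι, hfin, z, w, hrange, hai, hpos, hsum1, hsumy⟩ :=
    eq_pos_convex_span_of_mem_convexHull hy
  set N := Module.finrank ℝ X + 1 with hN
  have hcard : Fintype.card ι ≤ N := hai.card_le_finrank_succ.trans
    (Nat.add_le_add_right (Submodule.finrank_le _) 1)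
  obtain ⟨f⟩ : Nonempty (ι ↪ Fin N) := by
    rw [← Fintype.card_fin N] at hcard
    exact Function.Embedding.nonempty_of_card_le hcard
  obtain ⟨a₀, ha₀⟩ := hA
  refine ⟨fun j => if h : ∃ i, f i = j then w h.choose else 0,
    fun j => if h : ∃ i, f i = j then z h.choose else a₀, fun j => ?_, ?_, fun j => ?_, ?_⟩
  · dsimp only; split
    · exact (hpos _).le
    · rfl
  · rw [← Finset.sum_subset (Finset.subset_univ (Finset.univ.map f))
      (fun j _ hj => by
        rw [dif_neg]; rintro ⟨i, rfl⟩; exact hj (Finset.mem_map_of_mem f (Finset.mem_univ i))),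
      Finset.sum_map]
    rw [← hsum1]
    refine Finset.sum_congr rfl fun i _ => ?_
    have h : ∃ i', f i' = f i := ⟨i, rfl⟩
    rw [dif_pos h]
    congr 1
    exact f.injective h.choose_spec
  · dsimp only; split
    · exact hrange ⟨_, rfl⟩
    · exact ha₀
  · rw [← Finset.sum_subset (Finset.subset_univ (Finset.univ.map f))
      (fun j _ hj => by
        dsimp only; rw [dif_neg, zero_smul]; rintro ⟨i, rfl⟩;
        exact hj (Finset.mem_map_of_mem f (Finset.mem_univ i))),
      Finset.sum_map]
    rw [← hsumy]
    refine Finset.sum_congr rfl fun i _ => ?_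
    have h : ∃ i', f i' = f i := ⟨i, rfl⟩
    dsimp only
    rw [dif_pos h, dif_pos h]
    have := f.injective h.choose_spec
    rw [this]

set_option maxHeartbeats 2000000 in
/-- Let `A` be a nonempty closed set in a nontrivial finite-dimensional
real normed space. If the recession cone `A_∞` is a pointed convex cone and
`A = A + A_∞`, then `conv A` is closed. -/
theorem stmt6 {X : Type*} [NormedAddCommGroup X] [NormedSpace ℝ X]
    [FiniteDimensional ℝ X] [Nontrivial X]
    (A : Set X) (hA : A.Nonempty) (hAclosed : IsClosed A)
    (hconv : Convex ℝ (recessionCone A))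
    (hcone : ∀ t : ℝ, 0 < t → ∀ u ∈ recessionCone A, t • u ∈ recessionCone A)
    (hpointed : recessionCone A ∩ (-(recessionCone A)) = {0})
    (hsum : A + recessionCone A = A) :
    IsClosed (convexHull ℝ A) := by
  classical
  set N := Module.finrank ℝ X + 1 with hN
  rw [← isSeqClosed_iff_isClosed]
  intro y x hy hyx
  choose w z hw0 hw1 hzA hrep using fun n => caratheodory_fin hA (hy n)
  -- each weight is at most 1
  have hwle1 : ∀ n i, w n i ≤ 1 := by
    intro n i
    calc w n i ≤ ∑ j, w n j := Finset.single_le_sum (fun j _ => hw0 n j) (Finset.mem_univ i)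
    _ = 1 := hw1 n
  -- Step 1: the summands are uniformly bounded
  have hbdd : ∃ C : ℝ, ∀ n i, ‖w n i • z n i‖ ≤ C := by
    by_contra hCn
    push_neg at hCn
    set s : ℕ → ℝ := fun n => ∑ i, ‖w n i • z n i‖ with hs_def
    have hs0 : ∀ n, 0 ≤ s n := fun n => Finset.sum_nonneg fun i _ => norm_nonneg _
    have hvle : ∀ n i, ‖w n i • z n i‖ ≤ s n := fun n i =>
      Finset.single_le_sum (f := fun j => ‖w n j • z n j‖) (fun j _ => norm_nonneg _)
        (Finset.mem_univ i)
    have hfreq : ∀ k : ℕ, ∃ᶠ n in atTop, (k:ℝ) < s n := by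
      intro k
      rw [frequently_atTop]
      intro m
      obtain ⟨n, i, hni⟩ := hCn ((k:ℝ) + ∑ j ∈ Finset.range (m+1), s j)
      have hks : (k:ℝ) + ∑ j ∈ Finset.range (m+1), s j < s n := hni.trans_le (hvle n i)
      have hsum_nonneg : (0:ℝ) ≤ ∑ j ∈ Finset.range (m+1), s j :=
        Finset.sum_nonneg fun j _ => hs0 j
      refine ⟨n, ?_, by linarith⟩
      by_contra hnm
      push_neg at hnm
      have : s n ≤ ∑ j ∈ Finset.range (m+1), s j :=
        Finset.single_le_sum (f := s) (fun j _ => hs0 j)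
          (Finset.mem_range.mpr (Nat.lt_succ_of_lt hnm))
      have hk : (0:ℝ) ≤ k := Nat.cast_nonneg k
      linarith
    obtain ⟨φ, hφmono, hφ⟩ := extraction_forall_of_frequently hfreq
    have hsφpos : ∀ n, 0 < s (φ n) := fun n => lt_of_le_of_lt (Nat.cast_nonneg n) (hφ n)
    set u : ℕ → Fin N → X := fun n i => (s (φ n))⁻¹ • (w (φ n) i • z (φ n) i) with hu_def
    have hub : ∀ n, u n ∈ Metric.closedBall (0 : Fin N → X) 1 := by
      intro n
      rw [Metric.mem_closedBall, dist_zero_right, pi_norm_le_iff_of_nonneg zero_le_one]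
      intro i
      rw [norm_smul, norm_inv, Real.norm_of_nonneg (hs0 _)]
      rw [inv_mul_le_iff₀ (hsφpos n), mul_one]
      exact hvle _ i
    obtain ⟨W, -, ψ, hψmono, hψ⟩ :=
      tendsto_subseq_of_bounded (Metric.isBounded_closedBall) hub
    have hWi : ∀ i, Tendsto (fun n => u (ψ n) i) atTop (𝓝 (W i)) := by
      intro i
      exact (tendsto_pi_nhds.mp hψ) i
    set θ : ℕ → ℕ := fun n => φ (ψ n) with hθ_def
    have hθmono : StrictMono θ := hφmono.comp hψmono
    have hsθtop : Tendsto (fun n => s (θ n)) atTop atTop := by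
      have hle : ∀ n : ℕ, (n:ℝ) ≤ s (θ n) := fun n =>
        (Nat.cast_le.mpr hψmono.le_apply).trans (hφ (ψ n)).le
      exact tendsto_atTop_mono hle tendsto_natCast_atTop_atTop
    have hsinv : Tendsto (fun n => (s (θ n))⁻¹) atTop (𝓝 0) := hsθtop.inv_tendsto_atTop
    -- sum of W is 0
    have hWsum : ∑ i, W i = 0 := by
      have h1 : Tendsto (fun n => ∑ i, u (ψ n) i) atTop (𝓝 (∑ i, W i)) :=
        tendsto_finset_sum _ fun i _ => hWi i
      have h2 : ∀ n, ∑ i, u (ψ n) i = (s (θ n))⁻¹ • y (θ n) := by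
        intro n
        rw [← Finset.smul_sum, hrep]
      have h3 : Tendsto (fun n => (s (θ n))⁻¹ • y (θ n)) atTop (𝓝 ((0:ℝ) • x)) :=
        hsinv.smul (hyx.comp hθmono.tendsto_atTop)
      rw [zero_smul] at h3
      exact tendsto_nhds_unique h1 ((Filter.tendsto_congr h2).mpr h3)
    -- sum of norms of W is 1
    have hWnorm : ∑ i, ‖W i‖ = 1 := by
      have h1 : Tendsto (fun n => ∑ i, ‖u (ψ n) i‖) atTop (𝓝 (∑ i, ‖W i‖)) :=
        tendsto_finset_sum _ fun i _ => (hWi i).norm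
      have h2 : ∀ n, ∑ i, ‖u (ψ n) i‖ = 1 := by
        intro n
        have : ∀ i, ‖u (ψ n) i‖ = (s (θ n))⁻¹ * ‖w (θ n) i • z (θ n) i‖ := by
          intro i
          rw [hu_def, norm_smul, norm_inv, Real.norm_of_nonneg (hs0 _)]
        rw [Finset.sum_congr rfl fun i _ => this i, ← Finset.mul_sum]
        exact inv_mul_cancel₀ (hsφpos (ψ n)).ne'
      exact tendsto_nhds_unique ((Filter.tendsto_congr h2).mpr tendsto_const_nhds) h1 |>.symm
    -- each W i is in the recession cone
    have hWmem : ∀ i, W i ∈ recessionCone A := by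
      intro i
      by_cases hfq : ∃ᶠ n in atTop, w (θ n) i = 0
      · obtain ⟨σ, hσmono, hσ⟩ := extraction_of_frequently_atTop hfq
        have : Tendsto (fun k => u (ψ (σ k)) i) atTop (𝓝 (W i)) :=
          (hWi i).comp hσmono.tendsto_atTop
        have hzero : ∀ k, u (ψ (σ k)) i = 0 := by
          intro k
          rw [hu_def]
          dsimp only
          rw [hσ k, zero_smul, smul_zero]
        have : W i = 0 := tendsto_nhds_unique ((Filter.tendsto_congr hzero).mpr tendsto_const_nhds) this |>.symm
        rw [this]; exact zero_mem_rc hA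
      · rw [Filter.not_frequently] at hfq
        refine mem_rc_of_eventually (t := fun n => (s (θ n))⁻¹ * w (θ n) i)
          (a := fun n => z (θ n) i) ?_ ?_ (fun n => hzA _ i) ?_
        · filter_upwards [hfq] with n hn
          exact mul_pos (inv_pos.mpr (hsφpos (ψ n))) (lt_of_le_of_ne (hw0 _ i) (Ne.symm hn))
        · apply tendsto_of_tendsto_of_tendsto_of_le_of_le tendsto_const_nhds hsinv
          · intro n
            exact mul_nonneg (inv_nonneg.mpr (hs0 _)) (hw0 _ i)
          · intro n
            calc (s (θ n))⁻¹ * w (θ n) i ≤ (s (θ n))⁻¹ * 1 :=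
                  mul_le_mul_of_nonneg_left (hwle1 _ i) (inv_nonneg.mpr (hs0 _))
            _ = (s (θ n))⁻¹ := mul_one _
        · have : ∀ n, ((s (θ n))⁻¹ * w (θ n) i) • z (θ n) i = u (ψ n) i := by
            intro n
            rw [hu_def, mul_smul]
          exact (Filter.tendsto_congr this).mpr (hWi i)
    -- contradiction via pointedness
    obtain ⟨i₀, hi₀⟩ : ∃ i₀, W i₀ ≠ 0 := by
      by_contra hall
      push_neg at hall
      rw [Finset.sum_congr rfl (fun i _ => by rw [hall i, norm_zero])] at hWnorm
      simp at hWnorm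
    have hkey : -W i₀ = ∑ i ∈ Finset.univ.erase i₀, W i := by
      have h := Finset.add_sum_erase Finset.univ W (Finset.mem_univ i₀)
      rw [hWsum] at h
      exact neg_eq_of_add_eq_zero_right h
    have hneg : W i₀ ∈ -(recessionCone A) := by
      rw [Set.mem_neg, hkey]
      exact sum_mem_rc hA hconv hcone _ _ fun i _ => hWmem i
    have : W i₀ ∈ ({0} : Set X) := hpointed ▸ ⟨hWmem i₀, hneg⟩
    exact hi₀ this
  obtain ⟨C, hC⟩ := hbdd
  have hC0 : 0 ≤ C := le_trans (norm_nonneg _) (hC 0 0)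
  set R : ℝ := max 1 C with hR
  set p : ℕ → (Fin N → ℝ) × (Fin N → X) := fun n => (w n, fun i => w n i • z n i) with hp
  have hpb : ∀ n, p n ∈ Metric.closedBall (0 : (Fin N → ℝ) × (Fin N → X)) R := by
    intro n
    rw [Metric.mem_closedBall, dist_zero_right, Prod.norm_def]
    refine max_le ?_ ?_
    · rw [pi_norm_le_iff_of_nonneg (le_trans zero_le_one (le_max_left 1 C))]
      intro i
      rw [Real.norm_of_nonneg (hw0 n i)]
      exact le_trans (hwle1 n i) (le_max_left 1 C)
    · rw [pi_norm_le_iff_of_nonneg (le_trans zero_le_one (le_max_left 1 C))]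
      intro i
      exact le_trans (hC n i) (le_max_right 1 C)
  obtain ⟨L, -, ψ, hψmono, hψ⟩ := tendsto_subseq_of_bounded Metric.isBounded_closedBall hpb
  set Λ : Fin N → ℝ := L.1 with hΛ
  set V : Fin N → X := L.2 with hV
  have hwΛ : ∀ i, Tendsto (fun n => w (ψ n) i) atTop (𝓝 (Λ i)) := by
    intro i
    have h1 : Tendsto (fun n => (p ∘ ψ) n |>.1) atTop (𝓝 L.1) :=
      ((continuous_fst.tendsto L).comp hψ)
    exact (tendsto_pi_nhds.mp h1) i
  have hvV : ∀ i, Tendsto (fun n => w (ψ n) i • z (ψ n) i) atTop (𝓝 (V i)) := by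
    intro i
    have h1 : Tendsto (fun n => (p ∘ ψ) n |>.2) atTop (𝓝 L.2) :=
      ((continuous_snd.tendsto L).comp hψ)
    exact (tendsto_pi_nhds.mp h1) i
  have hΛ0 : ∀ i, 0 ≤ Λ i := fun i => ge_of_tendsto' (hwΛ i) fun n => hw0 _ i
  have hΛ1 : ∑ i, Λ i = 1 := by
    refine tendsto_nhds_unique (tendsto_finset_sum _ fun i _ => hwΛ i) ?_
    exact (Filter.tendsto_congr fun n => hw1 (ψ n)).mpr tendsto_const_nhds
  have hVx : ∑ i, V i = x := by
    refine tendsto_nhds_unique (tendsto_finset_sum _ fun i _ => hvV i) ?_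
    have : Tendsto (fun n => y (ψ n)) atTop (𝓝 x) := hyx.comp hψmono.tendsto_atTop
    exact (Filter.tendsto_congr fun n => hrep (ψ n)).mpr this
  -- points with positive limit weight converge into A
  have hbA : ∀ i, Λ i ≠ 0 → (Λ i)⁻¹ • V i ∈ A := by
    intro i hne
    have hev : ∀ᶠ n in atTop, w (ψ n) i ≠ 0 := (hwΛ i).eventually_ne hne
    have h1 : Tendsto (fun n => (w (ψ n) i)⁻¹ • (w (ψ n) i • z (ψ n) i)) atTop
        (𝓝 ((Λ i)⁻¹ • V i)) := ((hwΛ i).inv₀ hne).smul (hvV i)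
    have h2 : Tendsto (fun n => z (ψ n) i) atTop (𝓝 ((Λ i)⁻¹ • V i)) :=
      h1.congr' (hev.mono fun n hn => inv_smul_smul₀ hn _) |>.congr (fun n => rfl)
    exact hAclosed.mem_of_tendsto h2 (Eventually.of_forall fun n => hzA _ i)
  -- terms with zero limit weight land in the recession cone
  have hVmem : ∀ i, Λ i = 0 → V i ∈ recessionCone A := by
    intro i hΛi
    by_cases hfq : ∃ᶠ n in atTop, w (ψ n) i = 0
    · obtain ⟨σ, hσmono, hσ⟩ := extraction_of_frequently_atTop hfq
      have h1 : Tendsto (fun k => w (ψ (σ k)) i • z (ψ (σ k)) i) atTop (𝓝 (V i)) :=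
        (hvV i).comp hσmono.tendsto_atTop
      have hzero : ∀ k, w (ψ (σ k)) i • z (ψ (σ k)) i = 0 := by
        intro k; rw [hσ k, zero_smul]
      have : V i = 0 :=
        (tendsto_nhds_unique ((Filter.tendsto_congr hzero).mpr tendsto_const_nhds) h1).symm
      rw [this]; exact zero_mem_rc hA
    · rw [Filter.not_frequently] at hfq
      refine mem_rc_of_eventually (t := fun n => w (ψ n) i) (a := fun n => z (ψ n) i)
        ?_ ?_ (fun n => hzA _ i) (hvV i)
      · filter_upwards [hfq] with n hn
        exact lt_of_le_of_ne (hw0 _ i) (Ne.symm hn)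
      · rw [← hΛi]; exact hwΛ i
  -- assembly
  set P : Finset (Fin N) := Finset.univ.filter (fun i => Λ i ≠ 0) with hPdef
  set u₀ : X := ∑ i ∈ Finset.univ.filter (fun i => ¬ Λ i ≠ 0), V i with hu₀def
  have hu₀ : u₀ ∈ recessionCone A := by
    refine sum_mem_rc hA hconv hcone _ _ fun i hi => ?_
    exact hVmem i (not_not.mp (Finset.mem_filter.mp hi).2)
  have hsplit : ∑ i ∈ P, V i + u₀ = x := by
    rw [hPdef, hu₀def, Finset.sum_filter_add_sum_filter_not, hVx]
  have hPsum : ∑ i ∈ P, Λ i = 1 := by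
    rw [hPdef, Finset.sum_filter_ne_zero, hΛ1]
  have hqA : ∀ i ∈ P, (Λ i)⁻¹ • V i + u₀ ∈ A := by
    intro i hi
    rw [← hsum]
    exact Set.add_mem_add (hbA i (Finset.mem_filter.mp hi).2) hu₀
  have hmem : ∑ i ∈ P, Λ i • ((Λ i)⁻¹ • V i + u₀) ∈ convexHull ℝ A := by
    refine (convex_convexHull ℝ A).sum_mem (fun i _ => hΛ0 i) hPsum fun i hi => ?_
    exact subset_convexHull ℝ A (hqA i hi)
  have heq : ∑ i ∈ P, Λ i • ((Λ i)⁻¹ • V i + u₀) = x := by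
    have h1 : ∀ i ∈ P, Λ i • ((Λ i)⁻¹ • V i + u₀) = V i + Λ i • u₀ := by
      intro i hi
      rw [smul_add, smul_inv_smul₀ (Finset.mem_filter.mp hi).2]
    rw [Finset.sum_congr rfl h1, Finset.sum_add_distrib, ← Finset.sum_smul, hPsum, one_smul,
      hsplit]
  rwa [heq] at hmem
end

section
/- Let X be a finite-dimensional real normed space and let K, A ⊂ X satisfy condition (H). Assume that for all a, a' ∈ A with a ≠ a' and all λ ∈ (0,1) one has λa + (1−λ)a' ∈ int_K A. Then A is convex, σ_A is (Fréchet) differentiable at every point of int K⁻, and A + (K \ {0}) ⊂ int_K A. -/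
open Set Filter Topology Pointwise

variable {X : Type*} [NormedAddCommGroup X] [NormedSpace ℝ X]

/-- The support function `σ_A : X* → ℝ ∪ {+∞}`. -/
noncomputable def supportFn (A : Set X) (f : X →L[ℝ] ℝ) : EReal :=
  ⨆ a ∈ A, (f a : EReal)

/-- The negative dual cone `K⁻ = {x* : ⟨k, x*⟩ ≤ 0 for all k ∈ K}`. -/
def negDual (K : Set X) : Set (X →L[ℝ] ℝ) := {f | ∀ x ∈ K, f x ≤ 0}

/-- `σ_A` is (Fréchet) differentiable at `f`: there is a real-valued function agreeing
with `σ_A` on a neighbourhood of `f` which is differentiable at `f`. -/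
def SigmaDiffAt (A : Set X) (f : X →L[ℝ] ℝ) : Prop :=
  ∃ g : (X →L[ℝ] ℝ) → ℝ, (∀ᶠ y in 𝓝 f, ((g y : ℝ) : EReal) = supportFn A y) ∧
    DifferentiableAt ℝ g f

/-- `int_K A`: the interior of `A` in the subspace topology of `K`. -/
def intWithin (K A : Set X) : Set X :=
  {x ∈ K | ∃ U : Set X, IsOpen U ∧ x ∈ U ∧ K ∩ U ⊆ A}

/-- Attainment of the supremum of a coercively-negative linear functional on a
nonempty closed set in a finite-dimensional space. -/
lemma exists_max_of_coercive [FiniteDimensional ℝ X]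
    {A : Set X} (hAne : A.Nonempty) (hAclosed : IsClosed A)
    (y : X →L[ℝ] ℝ) {c : ℝ} (hc : 0 < c) (hy : ∀ a ∈ A, y a ≤ -(c * ‖a‖)) :
    ∃ a₀ ∈ A, ∀ a ∈ A, y a ≤ y a₀ := by
  obtain ⟨a₁, ha₁⟩ := hAne
  set S : Set X := A ∩ {a | y a₁ ≤ y a} with hS
  have hSne : S.Nonempty := ⟨a₁, ha₁, by simp only [Set.mem_setOf_eq]; exact le_rfl⟩
  have hSclosed : IsClosed S := hAclosed.inter (isClosed_le continuous_const y.continuous)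
  have hSsub : S ⊆ Metric.closedBall 0 ((-y a₁) / c) := by
    intro a ⟨haA, hay⟩
    have h1 : y a ≤ -(c * ‖a‖) := hy a haA
    have h2 : y a₁ ≤ y a := hay
    rw [Metric.mem_closedBall, dist_zero_right]
    rw [le_div_iff₀ hc]
    nlinarith
  have hScompact : IsCompact S :=
    (isCompact_closedBall (0 : X) _).of_isClosed_subset hSclosed hSsub
  obtain ⟨a₀, ha₀S, hmax⟩ := hScompact.exists_isMaxOn hSne y.continuous.continuousOn
  refine ⟨a₀, ha₀S.1, fun a ha => ?_⟩
  rcases le_total (y a) (y a₁) with h | h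
  · exact h.trans (hmax (show a₁ ∈ S from ⟨ha₁, by simp only [Set.mem_setOf_eq]; exact le_rfl⟩))
  · exact hmax (show a ∈ S from ⟨ha, h⟩)

set_option maxHeartbeats 1000000 in
/-- Let `K, A` satisfy condition (H) in a finite-dimensional real normed
space. If every open segment joining two distinct points of `A` lies in `int_K A`, then
`A` is convex, `σ_A` is differentiable at every point of `int K⁻`, and
`A + (K \ {0}) ⊆ int_K A`. -/
theorem stmt11 [FiniteDimensional ℝ X] [Nontrivial X]
    (hdim : 2 ≤ Module.finrank ℝ X)
    (K A : Set X)
    (hKconv : Convex ℝ K) (hKclosed : IsClosed K)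
    (hKcone : ∀ t : ℝ, 0 ≤ t → ∀ x ∈ K, t • x ∈ K)
    (hKpointed : K ∩ (-K) = {0}) (hKint : (interior K).Nonempty)
    (hAne : A.Nonempty) (hAclosed : IsClosed A)
    (hAK : A + K = A) (hAsub : A ⊆ K \ {0})
    (hsas : ∀ a ∈ A, ∀ a' ∈ A, a ≠ a' →
      ∀ t : ℝ, t ∈ Ioo (0 : ℝ) 1 → t • a + (1 - t) • a' ∈ intWithin K A) :
    Convex ℝ A ∧
    (∀ f ∈ interior (negDual K), SigmaDiffAt A f) ∧
    A + (K \ {0}) ⊆ intWithin K A := by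
  -- interior within K is contained in A
  have hintA : intWithin K A ⊆ A := by
    rintro x ⟨hxK, U, hU, hxU, hUA⟩
    exact hUA ⟨hxK, hxU⟩
  -- Part 1: convexity
  have hconv : Convex ℝ A := by
    intro x hx y hy s t hs ht hst
    rcases eq_or_ne x y with rfl | hxy
    · have hxx : s • x + t • x = x := by rw [← add_smul, hst, one_smul]
      rwa [hxx]
    rcases eq_or_lt_of_le hs with hs0 | hs0
    · have ht1 : t = 1 := by linarith
      simp only [← hs0, ht1, zero_smul, one_smul, zero_add]
      exact hy
    rcases eq_or_lt_of_le ht with ht0 | ht0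
    · have hs1 : s = 1 := by linarith
      simp only [← ht0, hs1, zero_smul, one_smul, add_zero]
      exact hx
    have hmem := hsas x hx y hy hxy s ⟨hs0, by linarith⟩
    have h1 : (1 : ℝ) - s = t := by linarith
    rw [h1] at hmem
    exact hintA hmem
  -- Part 3
  have hpart3 : A + (K \ {0}) ⊆ intWithin K A := by
    rintro z ⟨a, ha, k, ⟨hkK, hk0'⟩, rfl⟩
    have hk0 : k ≠ 0 := fun h => hk0' (by simp [h])
    have hkk : k + k ∈ K := by
      have := hKcone 2 (by norm_num) k hkK
      rwa [two_smul] at this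
    have ha2 : a + (k + k) ∈ A := by
      rw [← hAK]; exact Set.add_mem_add ha hkk
    have hne : a ≠ a + (k + k) := by
      intro h
      have h2 : k + k = 0 := by
        have := congrArg (· - a) h
        simpa using this.symm
      have : (2 : ℝ) • k = 0 := by rw [two_smul]; exact h2
      rcases smul_eq_zero.1 this with h | h
      · norm_num at h
      · exact hk0 h
    have hmem := hsas a ha (a + (k + k)) ha2 hne (1/2) ⟨by norm_num, by norm_num⟩
    have heq : (1/2 : ℝ) • a + (1 - 1/2 : ℝ) • (a + (k + k)) = a + k := by
      norm_num
      module
    rwa [heq] at hmem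
  refine ⟨hconv, ?_, hpart3⟩
  -- Part 2: differentiability
  intro f₀ hf₀
  obtain ⟨ε, hε, hball⟩ := Metric.mem_nhds_iff.1 (mem_interior_iff_mem_nhds.1 hf₀)
  set c : ℝ := ε / 2 with hcdef
  have hc : 0 < c := by positivity
  -- f₀ is coercively negative on K
  have hKneg : ∀ x ∈ K, f₀ x ≤ -(c * ‖x‖) := by
    intro x hx
    rcases eq_or_ne x 0 with rfl | hx0
    · simp
    obtain ⟨h, hh1, hhx⟩ := exists_dual_vector ℝ x (norm_ne_zero_iff.2 hx0)
    have hmem : f₀ + c • h ∈ Metric.ball f₀ ε := by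
      rw [Metric.mem_ball, dist_eq_norm]
      have h1 : f₀ + c • h - f₀ = c • h := by abel
      rw [h1]
      have h2 : ‖c • h‖ = ‖c‖ * ‖h‖ := norm_smul c h
      rw [h2, hh1, mul_one, Real.norm_eq_abs, abs_of_pos hc, hcdef]
      linarith
    have hle := hball hmem x hx
    have : (f₀ + c • h) x = f₀ x + c * ‖x‖ := by
      simp [ContinuousLinearMap.add_apply, ContinuousLinearMap.smul_apply, hhx]
    rw [this] at hle
    linarith
  -- functionals near f₀ are also coercively negative on K
  have hkey : ∀ y : X →L[ℝ] ℝ, ‖y - f₀‖ ≤ c / 2 → ∀ x ∈ K, y x ≤ -(c / 2 * ‖x‖) := by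
    intro y hy x hx
    have h1 : (y - f₀) x ≤ ‖y - f₀‖ * ‖x‖ := le_trans (le_abs_self _) ((y - f₀).le_opNorm x)
    have h2 : f₀ x ≤ -(c * ‖x‖) := hKneg x hx
    have h3 : y x = f₀ x + (y - f₀) x := by simp
    have h4 : (0 : ℝ) ≤ ‖x‖ := norm_nonneg x
    nlinarith [mul_le_mul_of_nonneg_right hy h4]
  have hattain : ∀ y : X →L[ℝ] ℝ, ‖y - f₀‖ ≤ c / 2 → ∃ a₀ ∈ A, ∀ a ∈ A, y a ≤ y a₀ := by
    intro y hy
    exact exists_max_of_coercive hAne hAclosed y (by positivity : (0:ℝ) < c / 2)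
      (fun a ha => hkey y hy a (hAsub ha).1)
  set g : (X →L[ℝ] ℝ) → ℝ := fun y => sSup ((fun a => y a) '' A) with hgdef
  have hg : ∀ y : X →L[ℝ] ℝ, ‖y - f₀‖ ≤ c / 2 →
      ∃ a₀ ∈ A, g y = y a₀ ∧ ∀ a ∈ A, y a ≤ y a₀ := by
    intro y hy
    obtain ⟨a₀, ha₀, hmax⟩ := hattain y hy
    refine ⟨a₀, ha₀, ?_, hmax⟩
    apply IsGreatest.csSup_eq
    exact ⟨⟨a₀, ha₀, rfl⟩, by rintro v ⟨a, ha, rfl⟩; exact hmax a ha⟩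
  clear_value g
  clear hgdef hattain
  have hc2 : (0:ℝ) < c / 2 := by linarith
  clear_value c
  clear hcdef hball hε
  -- eventual equality with supportFn
  have hgF : ∀ᶠ y in 𝓝 f₀, ((g y : ℝ) : EReal) = supportFn A y := by
    filter_upwards [Metric.closedBall_mem_nhds f₀ hc2] with y hy
    rw [Metric.mem_closedBall, dist_eq_norm] at hy
    obtain ⟨a₀, ha₀, hga, hub⟩ := hg y hy
    rw [hga]
    rw [supportFn]
    apply le_antisymm
    · exact le_iSup₂ (f := fun a (_ : a ∈ A) => ((y a : ℝ) : EReal)) a₀ ha₀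
    · exact iSup₂_le fun a ha => by exact_mod_cast hub a ha
  -- the maximizer at f₀
  obtain ⟨a₀, ha₀, hga₀, hmax₀⟩ := hg f₀ (by simp only [sub_self, norm_zero]; linarith)
  have ha₀K := hAsub ha₀
  have ha₀0 : a₀ ≠ 0 := ha₀K.2
  set M : ℝ := f₀ a₀ with hMdef
  have hMneg : M < 0 := by
    have := hKneg a₀ ha₀K.1
    have hn : 0 < ‖a₀‖ := norm_pos_iff.2 ha₀0
    nlinarith
  -- uniqueness of the maximizer
  have huniq : ∀ a ∈ A, f₀ a = M → a = a₀ := by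
    intro a ha hfa
    by_contra hne
    obtain ⟨hmK, U, hU, hmU, hUA⟩ :=
      hsas a ha a₀ ha₀ hne (1/2) ⟨by norm_num, by norm_num⟩
    set m : X := (1/2 : ℝ) • a + (1 - 1/2 : ℝ) • a₀ with hmdef
    have hmA : m ∈ A := hUA ⟨hmK, hmU⟩
    have hm0 : m ≠ 0 := (hAsub hmA).2
    have hfm : f₀ m = M := by
      rw [hmdef]
      simp only [map_add, map_smul, smul_eq_mul]
      rw [hfa, hMdef]; ring
    obtain ⟨r, hr, hrU⟩ := Metric.isOpen_iff.1 hU m hmU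
    set s : ℝ := min (1/2) (r / (2 * (‖m‖ + 1))) with hsdef
    have hmnorm : (0:ℝ) < ‖m‖ + 1 := by positivity
    have hs0 : 0 < s := by
      apply lt_min (by norm_num)
      positivity
    have hs1 : s ≤ 1/2 := min_le_left _ _
    have hsr : s * ‖m‖ < r := by
      have h1 : s ≤ r / (2 * (‖m‖ + 1)) := min_le_right _ _
      have h2 : s * ‖m‖ ≤ r / (2 * (‖m‖ + 1)) * ‖m‖ :=
        mul_le_mul_of_nonneg_right h1 (norm_nonneg m)
      have h3 : r / (2 * (‖m‖ + 1)) * ‖m‖ < r := by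
        rw [div_mul_eq_mul_div, div_lt_iff₀ (by positivity)]
        nlinarith [norm_nonneg m]
      linarith
    set m' : X := (1 - s) • m with hm'def
    have hm'U : m' ∈ U := by
      apply hrU
      rw [Metric.mem_ball, dist_eq_norm, hm'def]
      have : (1 - s) • m - m = (-s) • m := by
        rw [sub_smul, one_smul, neg_smul]; abel
      rw [this, norm_smul]
      simpa [abs_of_pos hs0] using hsr
    have hm'K : m' ∈ K := hKcone (1 - s) (by linarith) m hmK
    have hm'A : m' ∈ A := hUA ⟨hm'K, hm'U⟩
    have hfm' : f₀ m' = (1 - s) * M := by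
      rw [hm'def, map_smul, smul_eq_mul, hfm]
    have := hmax₀ m' hm'A
    rw [hfm'] at this
    nlinarith
  clear_value M
  -- the derivative
  set L : (X →L[ℝ] ℝ) →L[ℝ] ℝ := ContinuousLinearMap.apply ℝ ℝ a₀ with hLdef
  have hLapp : ∀ y : X →L[ℝ] ℝ, L y = y a₀ := fun y => rfl
  clear_value L
  clear hLdef
  -- bound on maximizers near f₀
  set R : ℝ := ‖a₀‖ + 2 * -M / c with hRdef
  have hR0 : 0 < R := by
    have h1 : (0:ℝ) ≤ ‖a₀‖ := norm_nonneg a₀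
    have h2 : (0:ℝ) < 2 * -M / c := div_pos (by linarith) hc
    rw [hRdef]
    linarith
  have hbound : ∀ y : X →L[ℝ] ℝ, ‖y - f₀‖ ≤ c / 2 → ∀ b ∈ A,
      (∀ a ∈ A, y a ≤ y b) → ‖b‖ ≤ R := by
    intro y hy b hb hub
    have h1 : y b ≤ -(c / 2 * ‖b‖) := hkey y hy b (hAsub hb).1
    have h2 : y a₀ ≤ y b := hub a₀ ha₀
    have h3 : -((y - f₀) a₀) ≤ ‖y - f₀‖ * ‖a₀‖ :=
      le_trans (neg_le_abs _) ((y - f₀).le_opNorm a₀)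
    have h4 : (y - f₀) a₀ = y a₀ - f₀ a₀ := by simp
    have h5 : ‖y - f₀‖ * ‖a₀‖ ≤ c / 2 * ‖a₀‖ :=
      mul_le_mul_of_nonneg_right hy (norm_nonneg a₀)
    have hq : 2 * -M / c * c = 2 * -M := div_mul_cancel₀ _ hc.ne'
    rw [hRdef]
    nlinarith [norm_nonneg b, norm_nonneg a₀, hq, hc, hMdef]
  clear_value R
  clear hRdef
  -- the little-o estimate
  have hlo : HasFDerivAt g L f₀ := by
    rw [hasFDerivAt_iff_isLittleO_nhds_zero]
    rw [Asymptotics.isLittleO_iff]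
    intro e he
    -- separation constant δ
    obtain ⟨δ, hδ0, hδ⟩ : ∃ δ : ℝ, 0 < δ ∧ ∀ a ∈ A, ‖a‖ ≤ R → e ≤ ‖a - a₀‖ → f₀ a ≤ M - δ := by
      set C : Set X := A ∩ Metric.closedBall 0 R ∩ {a | e ≤ ‖a - a₀‖} with hCdef
      have hCclosed : IsClosed C :=
        (hAclosed.inter Metric.isClosed_closedBall).inter
          (isClosed_le continuous_const (continuous_id.sub continuous_const).norm)
      have hCcompact : IsCompact C :=
        (isCompact_closedBall (0 : X) R).of_isClosed_subset hCclosed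
          (fun a ha => ha.1.2)
      rcases C.eq_empty_or_nonempty with hCe | hCne
      · refine ⟨1, one_pos, fun a ha haR hae => ?_⟩
        exfalso
        have : a ∈ C := ⟨⟨ha, by rwa [Metric.mem_closedBall, dist_zero_right]⟩, hae⟩
        rw [hCe] at this
        exact this
      obtain ⟨b, hbC, hbmax⟩ := hCcompact.exists_isMaxOn hCne f₀.continuous.continuousOn
      have hbA : b ∈ A := hbC.1.1
      have hblt : f₀ b < M := by
        rcases lt_or_eq_of_le (hmax₀ b hbA) with h | h
        · exact h
        · exfalso
          have hba := huniq b hbA h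
          rw [hba] at hbC
          have h2 : e ≤ ‖a₀ - a₀‖ := hbC.2
          simp only [sub_self, norm_zero] at h2
          linarith
      refine ⟨M - f₀ b, by linarith, fun a ha haR hae => ?_⟩
      have haC : a ∈ C := ⟨⟨ha, by rwa [Metric.mem_closedBall, dist_zero_right]⟩, hae⟩
      have := hbmax haC
      simp only [Set.mem_setOf_eq] at this
      linarith
    -- choose the neighbourhood radius
    have hT : (0:ℝ) < ‖a₀‖ + R + 1 := by linarith [norm_nonneg a₀]
    set η : ℝ := min (c / 2) (δ / (‖a₀‖ + R + 1)) with hηdef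
    have hη0 : 0 < η := lt_min hc2 (div_pos hδ0 hT)
    have hη1 : η ≤ c / 2 := min_le_left _ _
    have hη2 : η ≤ δ / (‖a₀‖ + R + 1) := min_le_right _ _
    clear_value η
    clear hηdef
    filter_upwards [Metric.closedBall_mem_nhds (0 : X →L[ℝ] ℝ) hη0] with v hv
    rw [Metric.mem_closedBall, dist_zero_right] at hv
    set y : X →L[ℝ] ℝ := f₀ + v with hydef
    have hvy : y - f₀ = v := by rw [hydef]; abel
    clear_value y
    have hyη : ‖y - f₀‖ ≤ η := by rw [hvy]; exact hv
    have hyc : ‖y - f₀‖ ≤ c / 2 := hyη.trans hη1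
    have hyδ : ‖y - f₀‖ ≤ δ / (‖a₀‖ + R + 1) := hyη.trans hη2
    obtain ⟨b, hbA, hgb, hub⟩ := hg y hyc
    have hbR : ‖b‖ ≤ R := hbound y hyc b hbA hub
    -- b is close to a₀
    have hbclose : ‖b - a₀‖ ≤ e := by
      by_contra hcon
      push_neg at hcon
      have h1 : f₀ b ≤ M - δ := hδ b hbA hbR hcon.le
      have h2 : y a₀ ≤ y b := hub a₀ ha₀
      have h3 : -((y - f₀) a₀) ≤ ‖y - f₀‖ * ‖a₀‖ :=
        le_trans (neg_le_abs _) ((y - f₀).le_opNorm a₀)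
      have h4 : (y - f₀) b ≤ ‖y - f₀‖ * ‖b‖ :=
        le_trans (le_abs_self _) ((y - f₀).le_opNorm b)
      have h5 : (y - f₀) a₀ = y a₀ - f₀ a₀ := by simp
      have h6 : (y - f₀) b = y b - f₀ b := by simp
      have h7 : ‖y - f₀‖ * ‖b‖ ≤ ‖y - f₀‖ * R :=
        mul_le_mul_of_nonneg_left hbR (norm_nonneg _)
      have h9 : ‖y - f₀‖ * ‖a₀‖ + ‖y - f₀‖ * R < δ := by
        have h8a : ‖y - f₀‖ * (‖a₀‖ + R) ≤ δ / (‖a₀‖ + R + 1) * (‖a₀‖ + R) :=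
          mul_le_mul_of_nonneg_right hyδ (by linarith [norm_nonneg a₀])
        have h8b : δ / (‖a₀‖ + R + 1) * (‖a₀‖ + R) < δ := by
          rw [div_mul_eq_mul_div, div_lt_iff₀ hT]
          nlinarith [hδ0, hR0, norm_nonneg a₀]
        nlinarith [h8a, h8b]
      -- f₀ b ≥ M - ‖y-f₀‖(‖a₀‖+R) > M - δ, contradiction
      linarith [h1, h2, h3, h4, h5.ge, h6.le, h7, h9, hMdef.le, hMdef.ge]
    -- the remainder estimate
    have hgf₀ : g f₀ = M := hga₀
    have h5 : (y - f₀) a₀ = y a₀ - f₀ a₀ := by simp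
    have hr2 : g y - g f₀ - (y - f₀) a₀ = y b - y a₀ := by
      rw [hgb, hgf₀, h5, hMdef]; ring
    have hr3 : y b - y a₀ ≤ ‖y - f₀‖ * ‖b - a₀‖ := by
      have h6 : (y - f₀) (b - a₀) ≤ ‖y - f₀‖ * ‖b - a₀‖ :=
        le_trans (le_abs_self _) ((y - f₀).le_opNorm _)
      have h7 : (y - f₀) (b - a₀) = y b - y a₀ - (f₀ b - f₀ a₀) := by
        simp only [ContinuousLinearMap.sub_apply, map_sub]; ring
      have h8 : f₀ b ≤ f₀ a₀ := hMdef ▸ hmax₀ b hbA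
      rw [h7] at h6
      linarith
    have hrupper : g y - g f₀ - (y - f₀) a₀ ≤ ‖y - f₀‖ * e := by
      rw [hr2]
      calc y b - y a₀ ≤ ‖y - f₀‖ * ‖b - a₀‖ := hr3
        _ ≤ ‖y - f₀‖ * e := mul_le_mul_of_nonneg_left hbclose (norm_nonneg _)
    have hrlower : 0 ≤ g y - g f₀ - (y - f₀) a₀ := by
      have hr1 : y a₀ ≤ g y := by rw [hgb]; exact hub a₀ ha₀
      rw [h5, hgf₀, hMdef]
      linarith
    -- conclude
    have hLv : L v = (y - f₀) a₀ := by rw [hvy]; exact hLapp v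
    rw [hLv, Real.norm_eq_abs, abs_of_nonneg hrlower, ← hvy]
    calc g y - g f₀ - (y - f₀) a₀ ≤ ‖y - f₀‖ * e := hrupper
      _ = e * ‖y - f₀‖ := mul_comm _ _
  exact ⟨g, hgF, hlo.differentiableAt⟩
end

section
/- Let X be a finite-dimensional real normed space and let K, A ⊂ X satisfy condition (H) with A ⊂ int K and A + (K \ {0}) ⊂ int A. Then σ_A is (Fréchet) differentiable at every point of int K⁻ if and only if A is convex and for all a, a' ∈ bd A with a ≠ a' and all λ ∈ (0,1) one has λa + (1−λ)a' ∉ bd A. -/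
open Set Filter Topology Pointwise

variable {X : Type*} [NormedAddCommGroup X] [NormedSpace ℝ X]

set_option linter.unusedSectionVars false

namespace Stmt12Aux

/-- Interior points of the negative dual are strictly negative on `K \ {0}`. -/
theorem negDual_lt {K : Set X} {f : X →L[ℝ] ℝ} (hf : f ∈ interior (negDual K)) :
    ∀ k ∈ K, k ≠ 0 → f k < 0 := by
  intro k hk hk0
  obtain ⟨ε, hε, hball⟩ := Metric.isOpen_iff.mp isOpen_interior f hf
  obtain ⟨φ, hφn, hφk⟩ := exists_dual_vector ℝ k (norm_ne_zero_iff.mpr hk0)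
  have hmem : f + (ε / 2) • φ ∈ negDual K := by
    refine interior_subset (hball ?_)
    have : dist (f + (ε / 2) • φ) f = ε / 2 := by
      have hns := norm_smul (ε / 2) φ
      rw [dist_eq_norm, add_sub_cancel_left, hns, hφn, mul_one, Real.norm_eq_abs,
        abs_of_pos (half_pos hε)]
    simp [Metric.mem_ball, this, half_lt_self hε]
  have h1 : f k + (ε / 2) * ‖k‖ ≤ 0 := by
    have := hmem k hk
    simpa [hφk] using this
  have h2 : 0 < (ε / 2) * ‖k‖ :=
    mul_pos (half_pos hε) (norm_pos_iff.mpr hk0)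
  linarith

/-- Strict negativity on a closed cone gives a coercivity estimate. -/
theorem exists_coercive [FiniteDimensional ℝ X] {K : Set X} (hKclosed : IsClosed K)
    (hKcone : ∀ t : ℝ, 0 ≤ t → ∀ x ∈ K, t • x ∈ K) {f : X →L[ℝ] ℝ}
    (hf : ∀ k ∈ K, k ≠ 0 → f k < 0) :
    ∃ δ : ℝ, 0 < δ ∧ ∀ k ∈ K, f k ≤ -δ * ‖k‖ := by
  by_cases hK : ∃ k ∈ K, k ≠ 0
  · obtain ⟨k₁, hk₁, hk₁0⟩ := hK
    set S := K ∩ Metric.sphere 0 1 with hS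
    have hSsub : S ⊆ Metric.closedBall 0 1 := fun x hx =>
      Metric.sphere_subset_closedBall hx.2
    have hScl : IsClosed S := hKclosed.inter Metric.isClosed_sphere
    have hScomp : IsCompact S :=
      (isCompact_closedBall 0 1).of_isClosed_subset hScl hSsub
    have hSne : S.Nonempty := by
      refine ⟨‖k₁‖⁻¹ • k₁, hKcone _ (by positivity) _ hk₁, ?_⟩
      have : ‖‖k₁‖⁻¹ • k₁‖ = 1 := by
        rw [norm_smul, norm_inv, norm_norm, inv_mul_cancel₀ (norm_ne_zero_iff.mpr hk₁0)]
      simpa [mem_sphere_zero_iff_norm] using this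
    obtain ⟨s₀, hs₀, hmax⟩ := hScomp.exists_isMaxOn hSne f.continuous.continuousOn
    have hs₀norm : ‖s₀‖ = 1 := by simpa [mem_sphere_zero_iff_norm] using hs₀.2
    have hs₀lt : f s₀ < 0 := hf s₀ hs₀.1 (by intro h; rw [h] at hs₀norm; simp at hs₀norm)
    refine ⟨-f s₀, by linarith, fun k hk => ?_⟩
    rcases eq_or_ne k 0 with rfl | hk0
    · simp
    · have hu : ‖k‖⁻¹ • k ∈ S := by
        refine ⟨hKcone _ (by positivity) _ hk, ?_⟩
        have : ‖‖k‖⁻¹ • k‖ = 1 := by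
          rw [norm_smul, norm_inv, norm_norm, inv_mul_cancel₀ (norm_ne_zero_iff.mpr hk0)]
        simpa [mem_sphere_zero_iff_norm] using this
      have h1 : f (‖k‖⁻¹ • k) ≤ f s₀ := hmax hu
      have h2 : ‖k‖⁻¹ * f k ≤ f s₀ := by simpa using h1
      have hkpos : (0 : ℝ) < ‖k‖ := norm_pos_iff.mpr hk0
      calc f k = ‖k‖ * (‖k‖⁻¹ * f k) := by field_simp
        _ ≤ ‖k‖ * f s₀ := by
            exact mul_le_mul_of_nonneg_left h2 hkpos.le
        _ = -(-f s₀) * ‖k‖ := by ring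
  · refine ⟨1, one_pos, fun k hk => ?_⟩
    push_neg at hK
    have : k = 0 := hK k hk
    simp [this]

/-- Coercive functionals are in the interior of the negative dual. -/
theorem mem_int_negDual {K : Set X} {f : X →L[ℝ] ℝ} {δ : ℝ} (hδ : 0 < δ)
    (hf : ∀ k ∈ K, f k ≤ -δ * ‖k‖) : f ∈ interior (negDual K) := by
  rw [mem_interior]
  refine ⟨Metric.ball f δ, fun y hy k hk => ?_, Metric.isOpen_ball, Metric.mem_ball_self hδ⟩
  have h1 : (y - f) k ≤ ‖y - f‖ * ‖k‖ := by
    calc (y - f) k ≤ ‖(y - f) k‖ := le_abs_self _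
      _ ≤ ‖y - f‖ * ‖k‖ := (y - f).le_opNorm k
  have h2 : ‖y - f‖ < δ := by simpa [dist_eq_norm] using hy
  have h3 : y k = f k + (y - f) k := by simp
  have h4 : f k ≤ -δ * ‖k‖ := hf k hk
  nlinarith [norm_nonneg k, norm_nonneg (y - f)]

/-- A coercive functional attains its supremum on a closed subset of `K`. -/
theorem exists_max [FiniteDimensional ℝ X] {K A : Set X} (hAclosed : IsClosed A)
    (hAne : A.Nonempty) (hAsubK : A ⊆ K) {y : X →L[ℝ] ℝ} {c : ℝ} (hc : 0 < c)
    (hy : ∀ k ∈ K, y k ≤ -c * ‖k‖) : ∃ m ∈ A, ∀ x ∈ A, y x ≤ y m := by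
  obtain ⟨a₀, ha₀⟩ := hAne
  set R : ℝ := max (-(y a₀) / c) ‖a₀‖ with hR
  set T := A ∩ Metric.closedBall 0 R with hT
  have hTne : T.Nonempty := ⟨a₀, ha₀, by
    simp only [Metric.mem_closedBall, dist_zero_right]
    exact le_max_right _ _⟩
  have hTcomp : IsCompact T :=
    (isCompact_closedBall 0 R).of_isClosed_subset
      (hAclosed.inter Metric.isClosed_closedBall) inter_subset_right
  obtain ⟨m, hm, hmax⟩ := hTcomp.exists_isMaxOn hTne y.continuous.continuousOn
  refine ⟨m, hm.1, fun x hx => ?_⟩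
  by_cases hxR : ‖x‖ ≤ R
  · exact hmax ⟨hx, by simpa [Metric.mem_closedBall, dist_zero_right] using hxR⟩
  · push_neg at hxR
    have h1 : y x ≤ -c * ‖x‖ := hy x (hAsubK hx)
    have h2 : -c * ‖x‖ < -c * R := by nlinarith
    have h3 : -c * R ≤ -c * (-(y a₀) / c) := by
      have := le_max_left (-(y a₀) / c) ‖a₀‖
      nlinarith
    have h4 : -c * (-(y a₀) / c) = y a₀ := by field_simp
    have h5 : y a₀ ≤ y m := hmax ⟨ha₀, by
      simp only [Metric.mem_closedBall, dist_zero_right]; exact le_max_right _ _⟩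
    linarith

/-- If the sup is attained at `m`, the support function equals `y m`. -/
theorem supportFn_eq_max {A : Set X} {y : X →L[ℝ] ℝ} {m : X} (hm : m ∈ A)
    (hmax : ∀ x ∈ A, y x ≤ y m) : supportFn A y = ((y m : ℝ) : EReal) := by
  refine le_antisymm ?_ ?_
  · exact iSup₂_le fun a ha => EReal.coe_le_coe_iff.mpr (hmax a ha)
  · exact le_iSup₂ (f := fun a (_ : a ∈ A) => ((y a : ℝ) : EReal)) m hm

/-- An upper bound on `A` gives an upper bound on the closed convex hull. -/
theorem le_on_chull {A : Set X} {y : X →L[ℝ] ℝ} {B : ℝ} (h : ∀ a ∈ A, y a ≤ B) :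
    ∀ c ∈ closure (convexHull ℝ A), y c ≤ B := by
  intro c hc
  have hsub : closure (convexHull ℝ A) ⊆ {x | y x ≤ B} := by
    refine closure_minimal (convexHull_min h ?_) ?_
    · intro u hu v hv a b ha hb hab
      simp only [mem_setOf_eq] at hu hv ⊢
      have heq : y (a • u + b • v) = a * y u + b * y v := by simp
      rw [heq]
      have hB : a * B + b * B = B := by rw [← add_mul, hab, one_mul]
      nlinarith [mul_le_mul_of_nonneg_left hu ha, mul_le_mul_of_nonneg_left hv hb]
    · exact isClosed_le y.continuous continuous_const
  exact hsub hc

/-- The closed convex hull of `A` is stable under adding elements of `K`. -/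
theorem chull_add_mem {A K : Set X} (hAK : A + K = A) {k : X} (hk : k ∈ K) {c : X}
    (hc : c ∈ closure (convexHull ℝ A)) : c + k ∈ closure (convexHull ℝ A) := by
  set s := {x : X | x + k ∈ closure (convexHull ℝ A)} with hs
  have hclosed : IsClosed s :=
    isClosed_closure.preimage (continuous_id.add continuous_const)
  have hconv : Convex ℝ s := by
    intro u hu v hv a b ha hb hab
    simp only [hs, mem_setOf_eq] at hu hv ⊢
    have heq : a • u + b • v + k = a • (u + k) + b • (v + k) := by
      have : a • (u + k) + b • (v + k) = a • u + b • v + (a + b) • k := by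
        simp [smul_add, add_smul]; abel
      rw [this, hab, one_smul]
    rw [heq]
    exact (convex_convexHull ℝ A).closure hu hv ha hb hab
  have hA : A ⊆ s := fun a ha =>
    subset_closure (subset_convexHull ℝ A (by rw [← hAK]; exact Set.add_mem_add ha hk))
  exact closure_minimal (convexHull_min hA hconv) hclosed hc


theorem exists_strict_neg [FiniteDimensional ℝ X] {K : Set X} (hKconv : Convex ℝ K)
    (hKclosed : IsClosed K) (hKcone : ∀ t : ℝ, 0 ≤ t → ∀ x ∈ K, t • x ∈ K)
    (hKpointed : K ∩ (-K) = {0}) (hKne : K.Nonempty) :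
    ∃ g : X →L[ℝ] ℝ, ∀ k ∈ K, k ≠ 0 → g k < 0 := by
  classical
  set n := Module.finrank ℝ X with hn
  set e : X ≃L[ℝ] EuclideanSpace ℝ (Fin n) := toEuclidean with he
  set K' : Set (EuclideanSpace ℝ (Fin n)) := ⇑e '' K with hK'
  have h0K : (0 : X) ∈ K := by
    obtain ⟨x, hx⟩ := hKne
    simpa using hKcone 0 le_rfl x hx
  have hK'conv : Convex ℝ K' := by
    have := hKconv.linear_image ((e : X →L[ℝ] EuclideanSpace ℝ (Fin n)) : X →ₗ[ℝ] EuclideanSpace ℝ (Fin n))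
    exact this
  have hK'closed : IsClosed K' := e.toHomeomorph.isClosedMap K hKclosed
  have hK'cone : ∀ t : ℝ, 0 ≤ t → ∀ x ∈ K', t • x ∈ K' := by
    rintro t ht x ⟨u, hu, rfl⟩
    exact ⟨t • u, hKcone t ht u hu, by simp⟩
  -- bundle K' as a convex cone
  set cone : ConvexCone ℝ (EuclideanSpace ℝ (Fin n)) :=
    { carrier := K'
      smul_mem' := fun c hc x hx => hK'cone c hc.le x hx
      add_mem' := by
        intro x hx y hy
        have hmid : (1/2 : ℝ) • x + (1/2 : ℝ) • y ∈ K' :=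
          hK'conv hx hy (by norm_num) (by norm_num) (by norm_num)
        have := hK'cone 2 (by norm_num) _ hmid
        simpa [smul_add, smul_smul] using this } with hcone
  have hconene : (cone : Set (EuclideanSpace ℝ (Fin n))).Nonempty := ⟨e 0, ⟨0, h0K, rfl⟩⟩
  set Ds : Set (EuclideanSpace ℝ (Fin n)) := (ProperCone.innerDual K' : Set (EuclideanSpace ℝ (Fin n))) with hDs
  have h0Ds : (0 : EuclideanSpace ℝ (Fin n)) ∈ Ds := ProperCone.mem_innerDual.mpr (fun x _ => by simp)
  have hDsconv : Convex ℝ Ds := (ProperCone.innerDual K').convex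
  -- interior of the dual cone is nonempty
  have hint : (interior Ds).Nonempty := by
    by_contra hcon
    rw [not_nonempty_iff_eq_empty] at hcon
    have hspan : affineSpan ℝ Ds ≠ ⊤ := by
      intro htop
      have := hDsconv.interior_nonempty_iff_affineSpan_eq_top.mpr htop
      rw [hcon] at this
      exact not_nonempty_empty this
    have hspan2 : Submodule.span ℝ Ds ≠ ⊤ := by
      intro htop
      apply hspan
      have h1 : (affineSpan ℝ (insert 0 Ds) : Set (EuclideanSpace ℝ (Fin n)))
          = (Submodule.span ℝ Ds : Set (EuclideanSpace ℝ (Fin n))) := affineSpan_insert_zero Ds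
      rw [insert_eq_self.mpr h0Ds] at h1
      have : (affineSpan ℝ Ds : Set (EuclideanSpace ℝ (Fin n))) = univ := by
        rw [h1, htop]; simp
      exact (AffineSubspace.coe_eq_univ_iff _).mp this
    -- find a nonzero vector orthogonal to the span of Ds
    set V := Submodule.span ℝ Ds with hV
    have hVorth : Vᗮ ≠ ⊥ := by
      intro hbot
      exact hspan2 (Submodule.orthogonal_eq_bot_iff.mp hbot)
    obtain ⟨w, hwV, hw0⟩ := Submodule.exists_mem_ne_zero_of_ne_bot hVorth
    have hwdual : ∀ (u : EuclideanSpace ℝ (Fin n)), u ∈ Ds → @inner ℝ _ _ u w = 0 := by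
      intro u hu
      exact (Submodule.mem_orthogonal V w).mp hwV u (Submodule.subset_span hu)
    have hbipolar : (ProperCone.innerDual (ProperCone.innerDual K' : Set (EuclideanSpace ℝ (Fin n))) :
        Set (EuclideanSpace ℝ (Fin n))) = K' := by
      have hPK : ((⟨cone.toPointedCone (.of_nonempty_of_isClosed hconene hK'closed), hK'closed⟩ :
          ProperCone ℝ (EuclideanSpace ℝ (Fin n))) : Set (EuclideanSpace ℝ (Fin n))) = K' := rfl
      rw [← hPK, ProperCone.innerDual_innerDual]
    have hwK' : w ∈ K' := by
      have hmem : w ∈ (ProperCone.innerDual (ProperCone.innerDual K' : Set (EuclideanSpace ℝ (Fin n))) :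
          Set (EuclideanSpace ℝ (Fin n))) := by
        rw [SetLike.mem_coe, ProperCone.mem_innerDual]
        intro u hu
        rw [hwdual u hu]
      rw [hbipolar] at hmem
      exact hmem
    have hwK'neg : -w ∈ K' := by
      have hmem : -w ∈ (ProperCone.innerDual (ProperCone.innerDual K' : Set (EuclideanSpace ℝ (Fin n))) :
          Set (EuclideanSpace ℝ (Fin n))) := by
        rw [SetLike.mem_coe, ProperCone.mem_innerDual]
        intro u hu
        rw [inner_neg_right, hwdual u hu, neg_zero]
      rw [hbipolar] at hmem
      exact hmem
    obtain ⟨u, huK, huw⟩ := hwK'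
    obtain ⟨u', hu'K, hu'w⟩ := hwK'neg
    have hu' : u' = -u := by
      apply e.injective
      rw [hu'w, map_neg, huw]
    have humem : u ∈ K ∩ (-K) := ⟨huK, Set.mem_neg.mpr (hu' ▸ hu'K)⟩
    rw [hKpointed] at humem
    apply hw0
    rw [← huw, humem, map_zero]
  -- get an interior point of the dual cone and make it strictly positive
  obtain ⟨v, hv⟩ := hint
  have hstrict : ∀ k' ∈ K', k' ≠ 0 → (0:ℝ) < @inner ℝ _ _ k' v := by
    intro k' hk' hk'0
    obtain ⟨ε, hε, hball⟩ := Metric.isOpen_iff.mp isOpen_interior v hv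
    have hnorm : (0:ℝ) < ‖k'‖ := norm_pos_iff.mpr hk'0
    set s : ℝ := ε / (2 * ‖k'‖) with hs
    have hspos : 0 < s := by positivity
    have hmem : v - s • k' ∈ Ds := by
      refine interior_subset (hball ?_)
      have hd : dist (v - s • k') v = s * ‖k'‖ := by
        rw [dist_eq_norm]
        have : v - s • k' - v = -(s • k') := by abel
        rw [this, norm_neg]
        have hns := norm_smul s k'
        rw [hns, Real.norm_eq_abs, abs_of_pos hspos]
      rw [Metric.mem_ball, hd, hs]
      have : ε / (2 * ‖k'‖) * ‖k'‖ = ε / 2 := by field_simp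
      rw [this]
      exact half_lt_self hε
    have h1 : (0:ℝ) ≤ @inner ℝ _ _ k' (v - s • k') := ProperCone.mem_innerDual.mp hmem hk'
    rw [inner_sub_right, real_inner_smul_right] at h1
    have h2 : (0:ℝ) < s * @inner ℝ _ _ k' k' := by
      rw [real_inner_self_eq_norm_sq]
      positivity
    linarith
  -- transport back to X
  refine ⟨-((innerSL ℝ v).comp (e : X →L[ℝ] EuclideanSpace ℝ (Fin n))), ?_⟩
  intro k hk hk0
  have hek : e k ∈ K' := ⟨k, hk, rfl⟩
  have hek0 : e k ≠ 0 := by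
    intro h
    exact hk0 (by simpa using congrArg e.symm h)
  have := hstrict (e k) hek hek0
  have hsym : @inner ℝ _ _ (e k) v = @inner ℝ _ _ v (e k) := real_inner_comm _ _
  simp only [ContinuousLinearMap.neg_apply, ContinuousLinearMap.comp_apply, innerSL_apply_apply]
  rw [hsym] at this
  have hco : ((e : X →L[ℝ] EuclideanSpace ℝ (Fin n)) k) = e k := rfl
  rw [hco]
  linarith


/-- Two points of the closed convex hull at which an `f` with differentiable support
function attains its supremum over `A` must coincide. -/
theorem eq_of_sigmaDiff {A : Set X} {f : X →L[ℝ] ℝ} (hd : SigmaDiffAt A f) {c c' : X}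
    (hc : c ∈ closure (convexHull ℝ A)) (hc' : c' ∈ closure (convexHull ℝ A))
    (hmc : ∀ a ∈ A, f a ≤ f c) (hmc' : ∀ a ∈ A, f a ≤ f c') : c = c' := by
  obtain ⟨g, heq, hdiff⟩ := hd
  have hub : ∀ᶠ y in 𝓝 f, ∀ d ∈ closure (convexHull ℝ A), y d ≤ g y := by
    filter_upwards [heq] with y hy
    refine le_on_chull fun a ha => ?_
    have h1 : ((y a : ℝ) : EReal) ≤ ((g y : ℝ) : EReal) := by
      rw [hy]
      exact le_iSup₂ (f := fun a (_ : a ∈ A) => ((y a : ℝ) : EReal)) a ha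
    exact_mod_cast h1
  have hgf : ∀ d ∈ closure (convexHull ℝ A), (∀ a ∈ A, f a ≤ f d) → g f = f d := by
    intro d hdmem hdmax
    have h1 : g f ≤ f d := by
      have h2 : ((g f : ℝ) : EReal) ≤ ((f d : ℝ) : EReal) := by
        rw [heq.self_of_nhds]
        exact iSup₂_le fun a ha => EReal.coe_le_coe_iff.mpr (hdmax a ha)
      exact_mod_cast h2
    exact le_antisymm h1 (hub.self_of_nhds d hdmem)
  set L := fderiv ℝ g f with hL
  have key : ∀ d : X, d ∈ closure (convexHull ℝ A) → (∀ a ∈ A, f a ≤ f d) →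
      ∀ h : X →L[ℝ] ℝ, h d ≤ L h := by
    intro d hdmem hdmax h
    -- the curve t ↦ g (f + t • h)
    have hline : HasDerivAt (fun t : ℝ => f + t • h) h 0 := by
      simpa using ((hasDerivAt_id (0 : ℝ)).smul_const h).const_add f
    have hF : HasFDerivAt g L f := hdiff.hasFDerivAt
    have hF' : HasFDerivAt g L ((fun t : ℝ => f + t • h) 0) := by simpa using hF
    have hφ : HasDerivAt (fun t : ℝ => g (f + t • h)) (L h) 0 := by
      have := hF'.comp_hasDerivAt 0 hline
      exact this
    have hcont : ContinuousAt (fun t : ℝ => f + t • h) 0 := hline.continuousAt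
    have hlow : ∀ᶠ t : ℝ in 𝓝 0, g f + t * h d ≤ g (f + t • h) := by
      have hev : ∀ᶠ t : ℝ in 𝓝 0, ∀ e ∈ closure (convexHull ℝ A),
          (f + t • h) e ≤ g (f + t • h) := by
        have h5 : Tendsto (fun t : ℝ => f + t • h) (𝓝 0) (𝓝 f) := by
          simpa using hcont.tendsto
        exact h5.eventually hub
      filter_upwards [hev] with t ht
      have h2 := ht d hdmem
      have h3 : (f + t • h) d = f d + t * h d := by simp
      rw [h3] at h2
      rw [hgf d hdmem hdmax]
      exact h2
    have hslope := hasDerivAt_iff_tendsto_slope.mp hφ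
    have hright : Tendsto (slope (fun t : ℝ => g (f + t • h)) 0) (𝓝[>] 0) (𝓝 (L h)) :=
      hslope.mono_left (nhdsWithin_mono _ fun x hx => ne_of_gt hx)
    refine ge_of_tendsto hright ?_
    have hlow' : ∀ᶠ t : ℝ in 𝓝[>] 0, g f + t * h d ≤ g (f + t • h) :=
      eventually_nhdsWithin_of_eventually_nhds hlow
    filter_upwards [hlow', self_mem_nhdsWithin] with t ht ht0
    rw [mem_Ioi] at ht0
    have h0 : g (f + (0:ℝ) • h) = g f := by norm_num
    rw [slope_def_field, h0, sub_zero, le_div_iff₀ ht0]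
    nlinarith
  have keyeq : ∀ h : X →L[ℝ] ℝ, h c = h c' := by
    intro h
    have h1 := key c hc hmc h
    have h2 := key c' hc' hmc' h
    have h3 := key c hc hmc (-h)
    have h4 := key c' hc' hmc' (-h)
    simp only [ContinuousLinearMap.neg_apply, map_neg] at h3 h4
    linarith
  by_contra hne
  obtain ⟨h, hn1, hv⟩ := exists_dual_vector ℝ (c - c') (norm_ne_zero_iff.mpr (sub_ne_zero.mpr hne))
  have h5 := keyeq h
  rw [map_sub] at hv
  have h6 : ‖c - c'‖ = 0 := by
    have : (‖c - c'‖ : ℝ) = h c - h c' := by exact_mod_cast hv.symm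
    rw [this, h5, sub_self]
  exact hne (by rwa [norm_eq_zero, sub_eq_zero] at h6)


/-- A nonzero functional has no maximizer over `A` in the interior of `A`. -/
theorem not_max_of_interior {A : Set X} {y : X →L[ℝ] ℝ} {c : X} (hy : y ≠ 0)
    (hc : c ∈ interior A) (hmax : ∀ x ∈ A, y x ≤ y c) : False := by
  have hw : ∃ w : X, 0 < y w := by
    by_contra hcon
    push_neg at hcon
    apply hy
    ext w
    have h1 := hcon w
    have h2 := hcon (-w)
    simp only [map_neg] at h2
    have : y w = 0 := le_antisymm h1 (by linarith)
    simpa using this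
  obtain ⟨w, hw⟩ := hw
  have hw0 : w ≠ 0 := by
    intro h; rw [h] at hw; simp at hw
  obtain ⟨ε, hε, hball⟩ := Metric.isOpen_iff.mp isOpen_interior c hc
  have hwn : (0:ℝ) < ‖w‖ := norm_pos_iff.mpr hw0
  set s : ℝ := ε / (2 * ‖w‖) with hs
  have hspos : 0 < s := div_pos hε (by nlinarith)
  have hmem : c + s • w ∈ A := by
    refine interior_subset (hball ?_)
    rw [Metric.mem_ball, dist_eq_norm, add_sub_cancel_left]
    have hns := norm_smul s w
    rw [hns, Real.norm_eq_abs, abs_of_pos hspos, hs]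
    have h1 : ε / (2 * ‖w‖) * ‖w‖ = ε / 2 := by
      field_simp [hwn.ne']
    rw [h1]
    exact half_lt_self hε
  have h2 := hmax _ hmem
  have h3 : y (c + s • w) = y c + s * y w := by simp
  nlinarith

theorem mem_frontier_of {A : Set X} {a : X} (ha : a ∈ A) (hi : a ∉ interior A) :
    a ∈ frontier A := ⟨subset_closure ha, hi⟩

/-- The sufficiency direction: strict convexity gives differentiability. -/
theorem sufficiency [FiniteDimensional ℝ X] {K A : Set X} (hKclosed : IsClosed K)
    (hKcone : ∀ t : ℝ, 0 ≤ t → ∀ x ∈ K, t • x ∈ K)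
    (hAclosed : IsClosed A) (hAne : A.Nonempty) (hAsubK : A ⊆ K)
    (hA0 : ∀ a ∈ A, a ≠ (0 : X))
    (hconv : Convex ℝ A)
    (hseg : ∀ a ∈ frontier A, ∀ a' ∈ frontier A, a ≠ a' →
      ∀ t : ℝ, t ∈ Ioo (0 : ℝ) 1 → t • a + (1 - t) • a' ∉ frontier A)
    {f : X →L[ℝ] ℝ} (hf : f ∈ interior (negDual K)) : SigmaDiffAt A f := by
  classical
  obtain ⟨a₀, ha₀⟩ := hAne
  have ha₀0 : a₀ ≠ 0 := hA0 a₀ ha₀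
  have hneg := negDual_lt hf
  obtain ⟨δ, hδ, hco⟩ := exists_coercive hKclosed hKcone hneg
  have hδ2 : (0:ℝ) < δ / 2 := half_pos hδ
  -- uniform coercivity on the ball of radius δ/2
  have huni : ∀ y ∈ Metric.closedBall f (δ/2), ∀ k ∈ K, y k ≤ -(δ/2) * ‖k‖ := by
    intro y hy k hk
    have h1 : (y - f) k ≤ ‖y - f‖ * ‖k‖ :=
      le_trans (le_abs_self _) ((y - f).le_opNorm k)
    have h2 : ‖y - f‖ ≤ δ / 2 := by
      rwa [Metric.mem_closedBall, dist_eq_norm] at hy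
    have h3 : y k = f k + (y - f) k := by simp
    have h4 := hco k hk
    nlinarith [norm_nonneg k, norm_nonneg (y - f),
      mul_le_mul_of_nonneg_right h2 (norm_nonneg k)]
  have hex : ∀ y ∈ Metric.closedBall f (δ/2), ∃ a, a ∈ A ∧ ∀ x ∈ A, y x ≤ y a := by
    intro y hy
    obtain ⟨m, hm, hmax⟩ := exists_max hAclosed ⟨a₀, ha₀⟩ hAsubK hδ2 (huni y hy)
    exact ⟨m, hm, hmax⟩
  set m : (X →L[ℝ] ℝ) → X :=
    fun y => if h : ∃ a, a ∈ A ∧ ∀ x ∈ A, y x ≤ y a then h.choose else a₀ with hmdef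
  have hmspec : ∀ y ∈ Metric.closedBall f (δ/2), m y ∈ A ∧ ∀ x ∈ A, y x ≤ y (m y) := by
    intro y hy
    have h := hex y hy
    rw [hmdef]
    simp only [dif_pos h]
    exact h.choose_spec
  have hfball : f ∈ Metric.closedBall f (δ/2) := Metric.mem_closedBall_self hδ2.le
  -- nonvanishing near f
  have hy0 : ∀ y ∈ Metric.closedBall f (δ/2), y ≠ (0 : X →L[ℝ] ℝ) := by
    intro y hy h0
    have h1 := huni y hy a₀ (hAsubK ha₀)
    rw [h0] at h1
    simp only [ContinuousLinearMap.zero_apply] at h1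
    nlinarith [norm_pos_iff.mpr ha₀0]
  -- uniqueness of the maximizer
  have huniq : ∀ y ∈ Metric.closedBall f (δ/2), ∀ c ∈ A, (∀ x ∈ A, y x ≤ y c) → c = m y := by
    intro y hy c hcA hcmax
    by_contra hne
    obtain ⟨hmA, hmmax⟩ := hmspec y hy
    have hcf : c ∈ frontier A :=
      mem_frontier_of hcA (fun hint => not_max_of_interior (hy0 y hy) hint hcmax)
    have hmf : m y ∈ frontier A :=
      mem_frontier_of hmA (fun hint => not_max_of_interior (hy0 y hy) hint hmmax)
    have hvaleq : y c = y (m y) := le_antisymm (hmmax c hcA) (hcmax (m y) hmA)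
    set mid := (1/2 : ℝ) • c + (1 - (1/2 : ℝ)) • m y with hmid
    have hmidA : mid ∈ A := hconv hcA hmA (by norm_num) (by norm_num) (by norm_num)
    have hmidval : y mid = y (m y) := by
      rw [hmid]
      simp only [map_add, map_smul]
      rw [← hvaleq]
      ring_nf
    have hmidmax : ∀ x ∈ A, y x ≤ y mid := fun x hx => by
      rw [hmidval]; exact hmmax x hx
    have hmidf : mid ∈ frontier A :=
      mem_frontier_of hmidA (fun hint => not_max_of_interior (hy0 y hy) hint hmidmax)
    exact hseg c hcf (m y) hmf hne (1/2) (by norm_num) hmidf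
  -- continuity of the argmax at f
  have hfa₀ : f a₀ < 0 := hneg a₀ (hAsubK ha₀) ha₀0
  set R : ℝ := ((δ/2) * ‖a₀‖ - f a₀) / (δ/2) with hRdef
  have hcont : ∀ ε > (0:ℝ), ∀ᶠ y in 𝓝 f, ‖m y - m f‖ ≤ ε := by
    intro ε hε
    by_contra hcon
    rw [Filter.not_eventually] at hcon
    have hseqex : ∀ n : ℕ, ∃ y : X →L[ℝ] ℝ,
        (dist y f ≤ min (δ/2) (1/(n+1)) ∧ ¬‖m y - m f‖ ≤ ε) := by
      intro n
      have hball : Metric.closedBall f (min (δ/2) (1/(n+1))) ∈ 𝓝 f :=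
        Metric.closedBall_mem_nhds f (by positivity)
      obtain ⟨y, hy1, hy2⟩ := (hcon.and_eventually hball).exists
      exact ⟨y, by simpa [Metric.mem_closedBall] using hy2, hy1⟩
    choose u hu1 hu2 using hseqex
    have humem : ∀ n, u n ∈ Metric.closedBall f (δ/2) := fun n =>
      Metric.mem_closedBall.mpr ((hu1 n).trans (min_le_left _ _))
    have huf : Tendsto u atTop (𝓝 f) := by
      rw [tendsto_iff_dist_tendsto_zero]
      refine squeeze_zero (fun n => dist_nonneg) (fun n => (hu1 n).trans (min_le_right _ _)) ?_
      exact tendsto_one_div_add_atTop_nhds_zero_nat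
    -- bound the maximizers
    have hmbound : ∀ n, ‖m (u n)‖ ≤ R := by
      intro n
      obtain ⟨hmA, hmmax⟩ := hmspec (u n) (humem n)
      have h1 : u n a₀ ≤ u n (m (u n)) := hmmax a₀ ha₀
      have h2 : u n (m (u n)) ≤ -(δ/2) * ‖m (u n)‖ := huni (u n) (humem n) _ (hAsubK hmA)
      have habs : ‖(u n - f) a₀‖ ≤ ‖u n - f‖ * ‖a₀‖ := (u n - f).le_opNorm a₀
      have h3 : -(‖u n - f‖ * ‖a₀‖) ≤ (u n - f) a₀ :=
        (abs_le.mp (by simpa using habs)).1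
      have h4 : ‖u n - f‖ ≤ δ / 2 := by
        have := humem n
        rwa [Metric.mem_closedBall, dist_eq_norm] at this
      have h5 : u n a₀ = f a₀ + (u n - f) a₀ := by simp
      rw [hRdef, le_div_iff₀ hδ2]
      nlinarith [norm_nonneg a₀, norm_nonneg (u n - f), norm_nonneg (m (u n)),
        mul_le_mul_of_nonneg_right h4 (norm_nonneg a₀)]
    -- extract a convergent subsequence of maximizers
    have hRnn : (0:ℝ) ≤ R := (norm_nonneg _).trans (hmbound 0)
    have hTcomp : IsCompact (A ∩ Metric.closedBall 0 R) :=
      (isCompact_closedBall 0 R).of_isClosed_subset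
        (hAclosed.inter Metric.isClosed_closedBall) inter_subset_right
    have hmem2 : ∀ n, m (u n) ∈ A ∩ Metric.closedBall 0 R := fun n =>
      ⟨(hmspec (u n) (humem n)).1, by
        rw [Metric.mem_closedBall, dist_zero_right]; exact hmbound n⟩
    obtain ⟨b, hbmem, φ, hφ, hbt⟩ := hTcomp.tendsto_subseq hmem2
    have huφ : Tendsto (u ∘ φ) atTop (𝓝 f) := huf.comp hφ.tendsto_atTop
    -- limit of the values
    have hval : Tendsto (fun n => (u (φ n)) (m (u (φ n)))) atTop (𝓝 (f b)) := by
      have hd1 : Tendsto (fun n => ‖u (φ n) - f‖) atTop (𝓝 0) := by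
        have := (tendsto_iff_dist_tendsto_zero.mp huφ)
        simpa [dist_eq_norm] using this
      have ht1 : Tendsto (fun n => (u (φ n) - f) (m (u (φ n)))) atTop (𝓝 0) := by
        refine squeeze_zero_norm (fun n => ?_) (by simpa using hd1.mul_const R)
        calc ‖(u (φ n) - f) (m (u (φ n)))‖ ≤ ‖u (φ n) - f‖ * ‖m (u (φ n))‖ :=
              (u (φ n) - f).le_opNorm _
          _ ≤ ‖u (φ n) - f‖ * R :=
              mul_le_mul_of_nonneg_left (hmbound (φ n)) (norm_nonneg _)
      have ht2 : Tendsto (fun n => f (m (u (φ n)))) atTop (𝓝 (f b)) :=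
        (f.continuous.tendsto b).comp hbt
      have heqn : ∀ n, (u (φ n)) (m (u (φ n)))
          = (u (φ n) - f) (m (u (φ n))) + f (m (u (φ n))) := by
        intro n; simp
      simp only [heqn]
      simpa using ht1.add ht2
    -- b is a maximizer for f
    have hbmax : ∀ x ∈ A, f x ≤ f b := by
      intro x hx
      have hev : Tendsto (fun n => (u (φ n)) x) atTop (𝓝 (f x)) :=
        ((ContinuousLinearMap.apply ℝ ℝ x).continuous.tendsto f).comp huφ
      refine le_of_tendsto_of_tendsto' hev hval fun n => ?_
      exact (hmspec (u (φ n)) (humem (φ n))).2 x hx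
    have hbeq : b = m f := huniq f hfball b hbmem.1 hbmax
    -- contradiction with the ε-separation
    have hsep : ∀ n, ε < ‖m (u (φ n)) - m f‖ := fun n => lt_of_not_ge (hu2 (φ n))
    have hnorm : Tendsto (fun n => ‖m (u (φ n)) - m f‖) atTop (𝓝 ‖b - m f‖) :=
      ((hbt.sub tendsto_const_nhds).norm)
    have hεle : ε ≤ ‖b - m f‖ :=
      ge_of_tendsto hnorm (Eventually.of_forall fun n => (hsep n).le)
    rw [hbeq, sub_self, norm_zero] at hεle
    linarith
  -- construct the differentiable local representative
  refine ⟨fun y => y (m y), ?_, ?_⟩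
  · filter_upwards [Metric.closedBall_mem_nhds f hδ2] with y hy
    exact (supportFn_eq_max (hmspec y hy).1 (hmspec y hy).2).symm
  · set D : (X →L[ℝ] ℝ) →L[ℝ] ℝ := ContinuousLinearMap.apply ℝ ℝ (m f) with hD
    refine (HasFDerivAt.differentiableAt (f' := D) ?_)
    rw [hasFDerivAt_iff_isLittleO_nhds_zero, Asymptotics.isLittleO_iff]
    intro c hc
    have hev1 : ∀ᶠ h : X →L[ℝ] ℝ in 𝓝 0, f + h ∈ Metric.closedBall f (δ/2) := by
      filter_upwards [Metric.closedBall_mem_nhds (0 : X →L[ℝ] ℝ) hδ2] with h hh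
      rw [Metric.mem_closedBall, dist_eq_norm, add_sub_cancel_left]
      rwa [Metric.mem_closedBall, dist_zero_right] at hh
    have hev2 : ∀ᶠ h : X →L[ℝ] ℝ in 𝓝 0, ‖m (f + h) - m f‖ ≤ c := by
      have htend : Tendsto (fun h : X →L[ℝ] ℝ => f + h) (𝓝 0) (𝓝 f) := by
        simpa using (tendsto_const_nhds.add tendsto_id :
          Tendsto (fun h : X →L[ℝ] ℝ => f + h) (𝓝 0) (𝓝 (f + 0)))
      exact htend.eventually (hcont c hc)
    filter_upwards [hev1, hev2] with h h1 h2
    obtain ⟨hyA, hymax⟩ := hmspec (f + h) h1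
    obtain ⟨hfA, hfmax⟩ := hmspec f hfball
    have hDh : D h = h (m f) := rfl
    set p := m (f + h) with hp
    set q := m f with hq
    have e1 : (f + h) p = f p + h p := by simp
    have e2 : (f + h) q = f q + h q := by simp
    have hlow : 0 ≤ (f + h) p - f q - h q := by
      have h3 := hymax q hfA
      rw [e2] at h3
      linarith
    have hupp : (f + h) p - f q - h q ≤ c * ‖h‖ := by
      have ha := hfmax p hyA
      have hb : h p - h q = h (p - q) := (map_sub h p q).symm
      have hc2 : h (p - q) ≤ ‖h‖ * ‖p - q‖ :=
        le_trans (le_abs_self _) (h.le_opNorm _)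
      have hc3 : ‖h‖ * ‖p - q‖ ≤ ‖h‖ * c :=
        mul_le_mul_of_nonneg_left h2 (norm_nonneg h)
      have hc4 : ‖h‖ * c = c * ‖h‖ := mul_comm _ _
      rw [e1]
      linarith
    rw [hDh, Real.norm_eq_abs, abs_of_nonneg hlow]
    exact hupp


/-- Supporting functional at a non-interior point of the closed convex hull. -/
theorem exists_support {A : Set X} (u₀ : X) (hu₀ : u₀ ∈ interior (closure (convexHull ℝ A)))
    {e : X} (heC : e ∈ closure (convexHull ℝ A)) (heb : e ∉ interior (closure (convexHull ℝ A))) :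
    ∃ f₀ : X →L[ℝ] ℝ, f₀ ≠ 0 ∧ ∀ x ∈ closure (convexHull ℝ A), f₀ x ≤ f₀ e := by
  set C := closure (convexHull ℝ A) with hC
  have hCconv : Convex ℝ C := (convex_convexHull ℝ A).closure
  obtain ⟨f₀, hf₀⟩ := geometric_hahn_banach_open_point hCconv.interior isOpen_interior heb
  refine ⟨f₀, ?_, ?_⟩
  · intro h0
    have := hf₀ u₀ hu₀
    rw [h0] at this
    simp at this
  · intro x hx
    have hcombo : ∀ t : ℝ, t ∈ Ioc (0:ℝ) 1 → (1 - t) • x + t • u₀ ∈ interior C := by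
      intro t ht
      exact hCconv.combo_closure_interior_mem_interior (subset_closure hx) hu₀
        (by linarith [ht.2, ht.1]) ht.1 (by ring)
    have hval : ∀ t : ℝ, t ∈ Ioc (0:ℝ) 1 → (1 - t) * f₀ x + t * f₀ u₀ ≤ f₀ e := by
      intro t ht
      have := hf₀ _ (hcombo t ht)
      simpa using this.le
    have htend : Tendsto (fun t : ℝ => (1 - t) * f₀ x + t * f₀ u₀) (𝓝[>] 0) (𝓝 (f₀ x)) := by
      have h1 : Tendsto (fun t : ℝ => (1 - t) * f₀ x + t * f₀ u₀) (𝓝 0) (𝓝 (f₀ x)) := by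
        have := (Continuous.tendsto (by continuity :
          Continuous (fun t : ℝ => (1 - t) * f₀ x + t * f₀ u₀)) 0)
        simpa using this
      exact h1.mono_left nhdsWithin_le_nhds
    refine le_of_tendsto htend ?_
    filter_upwards [Ioc_mem_nhdsGT_of_mem (by constructor <;> norm_num : (0:ℝ) ∈ Ico (0:ℝ) 1)]
      with t ht
    exact hval t ht

/-- A supporting functional of the hull at a point of the hull is nonpositive on `K`. -/
theorem negDual_of_support {A K : Set X} (hAK : A + K = A) {f₀ : X →L[ℝ] ℝ} {e : X}
    (heC : e ∈ closure (convexHull ℝ A))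
    (hsup : ∀ x ∈ closure (convexHull ℝ A), f₀ x ≤ f₀ e) : ∀ k ∈ K, f₀ k ≤ 0 := by
  intro k hk
  have := hsup (e + k) (chull_add_mem hAK hk heC)
  simp only [map_add] at this
  linarith

/-- If the sup over `A` is attained and `f₀` kills a nonzero direction of `K`,
then `f₀` must vanish; contrapositive gives interiority in the negative dual. -/
theorem int_negDual_of_max [FiniteDimensional ℝ X] {K A : Set X} (hKclosed : IsClosed K)
    (hKcone : ∀ t : ℝ, 0 ≤ t → ∀ x ∈ K, t • x ∈ K)
    (hssc : A + (K \ {0}) ⊆ interior A) {f₀ : X →L[ℝ] ℝ} (hf₀ : f₀ ≠ 0)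
    (hf₀K : ∀ k ∈ K, f₀ k ≤ 0) {b : X} (hbA : b ∈ A)
    (hbmax : ∀ x ∈ A, f₀ x ≤ f₀ b) : f₀ ∈ interior (negDual K) := by
  have hstrict : ∀ k ∈ K, k ≠ 0 → f₀ k < 0 := by
    intro k hk hk0
    rcases (hf₀K k hk).lt_or_eq with h | h
    · exact h
    · exfalso
      have hint : b + k ∈ interior A := hssc (Set.add_mem_add hbA ⟨hk, hk0⟩)
      refine not_max_of_interior hf₀ hint ?_
      intro x hx
      have heq : f₀ (b + k) = f₀ b := by
        rw [map_add, h, add_zero]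
      rw [heq]
      exact hbmax x hx
  obtain ⟨δ, hδ, hco⟩ := exists_coercive hKclosed hKcone hstrict
  exact mem_int_negDual hδ hco

/-- Perturbation argument: the supremum over `A` of a supporting functional of the hull
is attained, with the same value. -/
theorem attain_of_support [FiniteDimensional ℝ X] {K A : Set X}
    (hKclosed : IsClosed K) (hAclosed : IsClosed A) (hAne : A.Nonempty)
    (hAK : A + K = A) (hAsubK : A ⊆ K)
    {g₀ : X →L[ℝ] ℝ} {δ₀ : ℝ} (hδ₀ : 0 < δ₀) (hg₀ : ∀ k ∈ K, g₀ k ≤ -δ₀ * ‖k‖)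
    {f₀ : X →L[ℝ] ℝ} {e : X} (heC : e ∈ closure (convexHull ℝ A))
    (hsup : ∀ x ∈ closure (convexHull ℝ A), f₀ x ≤ f₀ e) :
    ∃ b ∈ A, f₀ b = f₀ e ∧ ∀ x ∈ A, f₀ x ≤ f₀ b := by
  classical
  set C := closure (convexHull ℝ A) with hC
  have hACsub : A ⊆ C := (subset_convexHull ℝ A).trans subset_closure
  have hf₀m : ∀ x ∈ A, f₀ x ≤ f₀ e := fun x hx => hsup x (hACsub hx)
  have hf₀K : ∀ k ∈ K, f₀ k ≤ 0 := fun k hk => by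
    have := hsup (e + k) (chull_add_mem hAK hk heC)
    simp only [map_add] at this
    linarith
  -- the perturbed functionals
  set t : ℕ → ℝ := fun n => 1 / (n + 1) with ht
  have htpos : ∀ n, 0 < t n := fun n => by positivity
  have htle1 : ∀ n, t n ≤ 1 := by
    intro n
    rw [ht]
    simp only
    rw [div_le_one (by positivity)]
    simp
  set F : ℕ → (X →L[ℝ] ℝ) := fun n => (1 - t n) • f₀ + t n • g₀ with hF
  have hFeval : ∀ n (x : X), F n x = (1 - t n) * f₀ x + t n * g₀ x := by
    intro n x
    simp [hF]
  have hFco : ∀ n, ∀ k ∈ K, F n k ≤ -(t n * δ₀) * ‖k‖ := by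
    intro n k hk
    have h2 : (1 - t n) * f₀ k ≤ 0 :=
      mul_nonpos_of_nonneg_of_nonpos (by linarith [htle1 n]) (hf₀K k hk)
    have h3 : t n * g₀ k ≤ t n * (-δ₀ * ‖k‖) :=
      mul_le_mul_of_nonneg_left (hg₀ k hk) (htpos n).le
    rw [hFeval]
    nlinarith
  -- maximizers of the perturbed functionals
  have hex : ∀ n, ∃ b ∈ A, ∀ x ∈ A, F n x ≤ F n b := fun n =>
    exists_max hAclosed hAne hAsubK (mul_pos (htpos n) hδ₀) (hFco n)
  choose m hmA hmmax using hex
  have hFe : ∀ n, F n e ≤ F n (m n) := fun n =>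
    le_on_chull (fun a ha => hmmax n a ha) e heC
  have hkey : ∀ n, g₀ e ≤ g₀ (m n) := by
    intro n
    have h1 := hFe n
    have h2 : f₀ (m n) ≤ f₀ e := hf₀m (m n) (hmA n)
    rw [hFeval, hFeval] at h1
    have h3 : (1 - t n) * f₀ (m n) ≤ (1 - t n) * f₀ e :=
      mul_le_mul_of_nonneg_left h2 (by linarith [htle1 n])
    exact le_of_mul_le_mul_left (by linarith) (htpos n)
  have hbound : ∀ n, ‖m n‖ ≤ -(g₀ e) / δ₀ := by
    intro n
    have h1 : g₀ (m n) ≤ -δ₀ * ‖m n‖ := hg₀ _ (hAsubK (hmA n))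
    have h2 := hkey n
    rw [le_div_iff₀ hδ₀]
    nlinarith
  set R : ℝ := -(g₀ e) / δ₀ with hR
  have hRnn : 0 ≤ R := (norm_nonneg (m 0)).trans (hbound 0)
  -- convergent subsequence
  have hTcomp : IsCompact (A ∩ Metric.closedBall 0 R) :=
    (isCompact_closedBall 0 R).of_isClosed_subset
      (hAclosed.inter Metric.isClosed_closedBall) inter_subset_right
  have hmem2 : ∀ n, m n ∈ A ∩ Metric.closedBall 0 R := fun n =>
    ⟨hmA n, by rw [Metric.mem_closedBall, dist_zero_right]; exact hbound n⟩
  obtain ⟨b, hbmem, φ, hφ, hbt⟩ := hTcomp.tendsto_subseq hmem2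
  -- t (φ n) → 0
  have htφ : Tendsto (fun n => t (φ n)) atTop (𝓝 0) := by
    refine squeeze_zero (fun n => (htpos _).le) (fun n => ?_)
      tendsto_one_div_add_atTop_nhds_zero_nat
    rw [ht]
    simp only
    refine one_div_le_one_div_of_le (by positivity) ?_
    have := hφ.le_apply (x := n)
    have h5 : (n : ℝ) ≤ (φ n : ℝ) := by exact_mod_cast this
    linarith
  -- limit of LHS values
  have hrw : ∀ n (x : X), F n x = f₀ x + t n * (g₀ x - f₀ x) := by
    intro n x
    rw [hFeval]
    ring
  have hlhs : Tendsto (fun n => F (φ n) (m (φ n))) atTop (𝓝 (f₀ b)) := by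
    have h1 : Tendsto (fun n => f₀ (m (φ n))) atTop (𝓝 (f₀ b)) :=
      (f₀.continuous.tendsto b).comp hbt
    have h2 : Tendsto (fun n => t (φ n) * (g₀ (m (φ n)) - f₀ (m (φ n)))) atTop (𝓝 0) := by
      refine squeeze_zero_norm (fun n => ?_)
        (by simpa using htφ.mul_const ((‖g₀‖ + ‖f₀‖) * R))
      rw [Real.norm_eq_abs, abs_mul, abs_of_pos (htpos _)]
      refine mul_le_mul_of_nonneg_left ?_ (htpos _).le
      have hg : |g₀ (m (φ n))| ≤ ‖g₀‖ * R := by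
        calc |g₀ (m (φ n))| ≤ ‖g₀‖ * ‖m (φ n)‖ := g₀.le_opNorm _
          _ ≤ ‖g₀‖ * R := mul_le_mul_of_nonneg_left (hbound _) (norm_nonneg _)
      have hf : |f₀ (m (φ n))| ≤ ‖f₀‖ * R := by
        calc |f₀ (m (φ n))| ≤ ‖f₀‖ * ‖m (φ n)‖ := f₀.le_opNorm _
          _ ≤ ‖f₀‖ * R := mul_le_mul_of_nonneg_left (hbound _) (norm_nonneg _)
      have habs : |g₀ (m (φ n)) - f₀ (m (φ n))| ≤ |g₀ (m (φ n))| + |f₀ (m (φ n))| :=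
        abs_sub _ _
      nlinarith
    have h3 : Tendsto
        (fun n => f₀ (m (φ n)) + t (φ n) * (g₀ (m (φ n)) - f₀ (m (φ n)))) atTop
        (𝓝 (f₀ b)) := by
      simpa using h1.add h2
    refine h3.congr fun n => ?_
    rw [hrw]
  -- limit of RHS values
  have hrhs : Tendsto (fun n => F (φ n) e) atTop (𝓝 (f₀ e)) := by
    have h2 : Tendsto (fun n => t (φ n) * (g₀ e - f₀ e)) atTop (𝓝 0) := by
      simpa using htφ.mul_const (g₀ e - f₀ e)
    have h3 : Tendsto (fun n => f₀ e + t (φ n) * (g₀ e - f₀ e)) atTop (𝓝 (f₀ e)) := by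
      simpa using (tendsto_const_nhds (x := f₀ e) (f := atTop)).add h2
    refine h3.congr fun n => ?_
    rw [hrw]
  have hge : f₀ e ≤ f₀ b :=
    le_of_tendsto_of_tendsto' hrhs hlhs fun n => hFe (φ n)
  have heqv : f₀ b = f₀ e := le_antisymm (hf₀m b hbmem.1) hge
  exact ⟨b, hbmem.1, heqv, fun x hx => (hf₀m x hx).trans_eq heqv.symm⟩


/-- Main necessity lemma: differentiability everywhere on `int K⁻` forces the closed
convex hull of `A` to equal `A`. -/
theorem hull_subset [FiniteDimensional ℝ X] {K A : Set X}
    (hKconv : Convex ℝ K) (hKclosed : IsClosed K)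
    (hKcone : ∀ t : ℝ, 0 ≤ t → ∀ x ∈ K, t • x ∈ K)
    (hKpointed : K ∩ (-K) = {0})
    (hAne : A.Nonempty) (hAclosed : IsClosed A)
    (hAK : A + K = A) (hAsub : A ⊆ K \ {0})
    (hssc : A + (K \ {0}) ⊆ interior A)
    (hLHS : ∀ f ∈ interior (negDual K), SigmaDiffAt A f) :
    closure (convexHull ℝ A) ⊆ A := by
  classical
  set C := closure (convexHull ℝ A) with hC
  have hACsub : A ⊆ C := (subset_convexHull ℝ A).trans subset_closure
  have hAsubK : A ⊆ K := fun a ha => (hAsub ha).1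
  have hCK : C ⊆ K := closure_minimal (convexHull_min hAsubK hKconv) hKclosed
  obtain ⟨a₀, ha₀⟩ := hAne
  have ha₀K : a₀ ∈ K \ {0} := hAsub ha₀
  have ha₀0 : a₀ ≠ 0 := by simpa using ha₀K.2
  have hKne : K.Nonempty := ⟨a₀, ha₀K.1⟩
  obtain ⟨g₀, hg₀s⟩ := exists_strict_neg hKconv hKclosed hKcone hKpointed hKne
  obtain ⟨δ₀, hδ₀, hg₀⟩ := exists_coercive hKclosed hKcone hg₀s
  -- interior of C is nonempty
  have hu₀ : a₀ + a₀ ∈ interior C := by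
    have h1 : a₀ + a₀ ∈ interior A := hssc (Set.add_mem_add ha₀ ha₀K)
    exact interior_mono (by rw [hC]; exact hACsub) h1
  -- main step
  intro x hx
  set T : Set ℝ := Ici (0:ℝ) ∩ (fun s : ℝ => x - s • a₀) ⁻¹' C with hT
  have h0T : (0:ℝ) ∈ T := ⟨mem_Ici.mpr le_rfl, by simpa using hx⟩
  have hTbdd : BddAbove T := by
    refine ⟨g₀ x / g₀ a₀, fun s hs => ?_⟩
    have hga₀ : g₀ a₀ < 0 := hg₀s a₀ ha₀K.1 ha₀0
    have h1 : g₀ (x - s • a₀) ≤ 0 := by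
      have h2 := hg₀ _ (hCK hs.2)
      nlinarith [norm_nonneg (x - s • a₀)]
    rw [le_div_iff_of_neg hga₀]
    have h3 : g₀ (x - s • a₀) = g₀ x - s * g₀ a₀ := by simp
    nlinarith
  have hTclosed : IsClosed T :=
    isClosed_Ici.inter (isClosed_closure.preimage
      (continuous_const.sub (continuous_id.smul continuous_const)))
  set ts : ℝ := sSup T with hts
  have htsT : ts ∈ T := hTclosed.csSup_mem ⟨0, h0T⟩ hTbdd
  set e : X := x - ts • a₀ with he
  have heC : e ∈ C := htsT.2
  have henint : e ∉ interior C := by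
    intro hint
    obtain ⟨ε, hε, hball⟩ := Metric.isOpen_iff.mp isOpen_interior e hint
    have ha₀n : (0:ℝ) < ‖a₀‖ := norm_pos_iff.mpr ha₀0
    set s : ℝ := ε / (2 * ‖a₀‖) with hs
    have hspos : 0 < s := div_pos hε (by nlinarith)
    have hmem : x - (ts + s) • a₀ ∈ C := by
      have h1 : x - (ts + s) • a₀ = e - s • a₀ := by
        rw [he, add_smul]; abel
      rw [h1]
      refine interior_subset (hball ?_)
      rw [Metric.mem_ball, dist_eq_norm]
      have h2 : e - s • a₀ - e = -(s • a₀) := by abel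
      rw [h2, norm_neg]
      have hns := norm_smul s a₀
      rw [hns, Real.norm_eq_abs, abs_of_pos hspos, hs]
      have h3 : ε / (2 * ‖a₀‖) * ‖a₀‖ = ε / 2 := by field_simp
      rw [h3]
      exact half_lt_self hε
    have h4 : ts + s ∈ T := ⟨mem_Ici.mpr (by have := mem_Ici.mp htsT.1; linarith), hmem⟩
    have h5 := le_csSup hTbdd h4
    linarith
  -- supporting functional at e
  obtain ⟨f₀, hf₀ne, hsup⟩ := exists_support (a₀ + a₀) hu₀ heC henint
  obtain ⟨b, hbA, hbeq, hbmax⟩ :=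
    attain_of_support hKclosed hAclosed ⟨a₀, ha₀⟩ hAK hAsubK hδ₀ hg₀ heC hsup
  have hf₀K : ∀ k ∈ K, f₀ k ≤ 0 := negDual_of_support hAK heC hsup
  have hf₀int : f₀ ∈ interior (negDual K) :=
    int_negDual_of_max hKclosed hKcone hssc hf₀ne hf₀K hbA hbmax
  have hdiff := hLHS f₀ hf₀int
  have heb : e = b := by
    refine eq_of_sigmaDiff hdiff heC (hACsub hbA) ?_ hbmax
    intro a ha
    exact hsup a (hACsub ha)
  have hxe : x = e + ts • a₀ := by rw [he]; abel
  rw [hxe, heb]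
  rw [← hAK]
  exact Set.add_mem_add hbA (hKcone ts htsT.1 a₀ ha₀K.1)

end Stmt12Aux

open Stmt12Aux in
/-- Let `K, A` satisfy condition (H) in a finite-dimensional real normed
space, with `A ⊆ int K` and `A + (K \ {0}) ⊆ int A`. Then `σ_A` is differentiable at every
point of `int K⁻` iff `A` is convex and no open segment joining two distinct boundary
points of `A` meets the boundary of `A`. -/
theorem stmt12 [FiniteDimensional ℝ X] [Nontrivial X]
    (hdim : 2 ≤ Module.finrank ℝ X)
    (K A : Set X)
    (hKconv : Convex ℝ K) (hKclosed : IsClosed K)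
    (hKcone : ∀ t : ℝ, 0 ≤ t → ∀ x ∈ K, t • x ∈ K)
    (hKpointed : K ∩ (-K) = {0}) (hKint : (interior K).Nonempty)
    (hAne : A.Nonempty) (hAclosed : IsClosed A)
    (hAK : A + K = A) (hAsub : A ⊆ K \ {0})
    (hAint : A ⊆ interior K)
    (hssc : A + (K \ {0}) ⊆ interior A) :
    (∀ f ∈ interior (negDual K), SigmaDiffAt A f) ↔
      (Convex ℝ A ∧
        ∀ a ∈ frontier A, ∀ a' ∈ frontier A, a ≠ a' →
          ∀ t : ℝ, t ∈ Ioo (0 : ℝ) 1 → t • a + (1 - t) • a' ∉ frontier A) := by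
  constructor
  · intro hLHS
    set C := closure (convexHull ℝ A) with hC
    have hACsub : A ⊆ C := (subset_convexHull ℝ A).trans subset_closure
    have hCA : C ⊆ A :=
      hull_subset hKconv hKclosed hKcone hKpointed hAne hAclosed hAK hAsub hssc hLHS
    have hAeq : A = C := Subset.antisymm hACsub hCA
    have hAconv : Convex ℝ A := by
      rw [hAeq]
      exact (convex_convexHull ℝ A).closure
    refine ⟨hAconv, ?_⟩
    intro a ha a' ha' hne t ht hmf
    obtain ⟨a₀, ha₀⟩ := hAne
    have ha₀K : a₀ ∈ K \ {0} := hAsub ha₀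
    -- interior of C is nonempty
    have hu₀ : a₀ + a₀ ∈ interior C := by
      have h1 : a₀ + a₀ ∈ interior A := hssc (Set.add_mem_add ha₀ ha₀K)
      exact interior_mono (by rw [hC]; exact hACsub) h1
    set mm := t • a + (1 - t) • a' with hmm
    have hmA : mm ∈ A := by
      have h1 : mm ∈ closure A := hmf.1
      rwa [hAclosed.closure_eq] at h1
    have hmC : mm ∈ C := hACsub hmA
    have hmnint : mm ∉ interior C := by
      rw [← hAeq]
      exact hmf.2
    obtain ⟨f₀, hf₀ne, hsup⟩ := exists_support (a₀ + a₀) hu₀ hmC hmnint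
    have hmax : ∀ x ∈ A, f₀ x ≤ f₀ mm := fun x hx => hsup x (hACsub hx)
    have hf₀K : ∀ k ∈ K, f₀ k ≤ 0 := negDual_of_support hAK hmC hsup
    have hf₀int : f₀ ∈ interior (negDual K) :=
      int_negDual_of_max hKclosed hKcone hssc hf₀ne hf₀K hmA hmax
    have hdiff := hLHS f₀ hf₀int
    -- both endpoints attain the max
    have hva : f₀ a ≤ f₀ mm := hmax a (hAclosed.frontier_subset ha)
    have hva' : f₀ a' ≤ f₀ mm := hmax a' (hAclosed.frontier_subset ha')
    have hcombo : f₀ mm = t * f₀ a + (1 - t) * f₀ a' := by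
      rw [hmm]; simp
    have hea : f₀ a = f₀ mm := by nlinarith [ht.1, ht.2]
    have hea' : f₀ a' = f₀ mm := by nlinarith [ht.1, ht.2]
    have : a = a' := by
      refine eq_of_sigmaDiff hdiff (hACsub (hAclosed.frontier_subset ha))
        (hACsub (hAclosed.frontier_subset ha')) ?_ ?_
      · intro z hz; rw [hea]; exact hmax z hz
      · intro z hz; rw [hea']; exact hmax z hz
    exact hne this
  · rintro ⟨hconv, hseg⟩ f hf
    have hAsubK : A ⊆ K := fun a ha => (hAsub ha).1
    have hA0 : ∀ a ∈ A, a ≠ (0:X) := fun a ha => by simpa using (hAsub ha).2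
    exact sufficiency hKclosed hKcone hAclosed hAne hAsubK hA0 hconv hseg hf
end
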